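/- arXiv:2201.04753 — 4 statements merged into one kernel-verified Lean document; each statement's English description precedes it below -/
import Mathlib

section
/- For a standard Gaussian random variable N and a differentiable function f with E[f(N)] = 0, equality E[f'(N)]² = E[f(N)²] holds if and only if f(x) = αx for some real α (almost everywhere with respect to the Gaussian measure). -/
open MeasureTheory ProbabilityTheory Real Filter Set


noncomputable abbrev gphi : ℝ → ℝ := gaussianPDFReal 0 1
lemma gphi_def (x : ℝ) : gphi x = (Real.sqrt (2 * π))⁻¹ * Real.exp (-x ^ 2 / 2) := by
  simp [gaussianPDFReal, ProbabilityTheory.gaussianPDFReal]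
lemma gphi_pos (x : ℝ) : 0 < gphi x := gaussianPDFReal_pos 0 1 x one_ne_zero
lemma gphi_hasDeriv (x : ℝ) : HasDerivAt gphi (-x * gphi x) x := by
  have h1 : HasDerivAt (fun y : ℝ => -y ^ 2 / 2) (-x) x := by
    have := ((hasDerivAt_pow 2 x).neg).div_const 2
    exact this.congr_deriv (by norm_num; ring)
  have h2 : HasDerivAt (fun y : ℝ => (Real.sqrt (2 * π))⁻¹ * Real.exp (-y ^ 2 / 2))
      ((Real.sqrt (2 * π))⁻¹ * (Real.exp (-x ^ 2 / 2) * (-x))) x :=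
    ((h1.exp).const_mul _)
  have : gphi = fun y => (Real.sqrt (2 * π))⁻¹ * Real.exp (-y ^ 2 / 2) := funext gphi_def
  rw [this]; convert h2 using 1; simp only []; ring
lemma integral_gauss_eq (g : ℝ → ℝ) :
    ∫ x, g x ∂(gaussianReal 0 1) = ∫ x, g x * gphi x := by
  rw [gaussianReal_of_var_ne_zero 0 one_ne_zero, gaussianPDF_def]
  simp only [ENNReal.ofReal]
  rw [integral_withDensity_eq_integral_smul
    ((measurable_gaussianPDFReal 0 1).real_toNNReal) g]
  congr 1; ext x
  simp [NNReal.smul_def, Real.coe_toNNReal _ (gaussianPDFReal_nonneg 0 1 x), mul_comm]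
lemma integrable_gauss_iff (g : ℝ → ℝ) :
    Integrable g (gaussianReal 0 1) ↔ Integrable (fun x => g x * gphi x) := by
  rw [gaussianReal_of_var_ne_zero 0 one_ne_zero, gaussianPDF_def,
    integrable_withDensity_iff ((measurable_gaussianPDFReal 0 1).ennreal_ofReal)
      (ae_of_all _ fun x => ENNReal.ofReal_lt_top)]
  simp_rw [ENNReal.toReal_ofReal (gaussianPDFReal_nonneg 0 1 _)]

lemma gphi_tendsto_atTop : Tendsto gphi atTop (nhds 0) := by
  have h2 : Tendsto (fun x : ℝ => x ^ 2) atTop atTop := tendsto_pow_atTop two_ne_zero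
  have : Tendsto (fun x : ℝ => -x ^ 2 / 2) atTop atBot :=
    Tendsto.atBot_div_const two_pos (tendsto_neg_atTop_atBot.comp h2)
  have h := (Real.tendsto_exp_atBot.comp this).const_mul (Real.sqrt (2 * π))⁻¹
  simp only [mul_zero] at h
  exact h.congr fun x => (gphi_def x).symm
lemma gphi_tendsto_atBot : Tendsto gphi atBot (nhds 0) := by
  have h2 : Tendsto (fun x : ℝ => x ^ 2) atBot atTop := by
    have h0 : Tendsto (fun x : ℝ => x ^ 2) atTop atTop := tendsto_pow_atTop two_ne_zero
    have := h0.comp tendsto_neg_atBot_atTop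
    exact this.congr fun x => neg_sq x
  have : Tendsto (fun x : ℝ => -x ^ 2 / 2) atBot atBot :=
    Tendsto.atBot_div_const two_pos (tendsto_neg_atTop_atBot.comp h2)
  have h := (Real.tendsto_exp_atBot.comp this).const_mul (Real.sqrt (2 * π))⁻¹
  simp only [mul_zero] at h
  exact h.congr fun x => (gphi_def x).symm

-- not-integrable contradiction helper
lemma not_integrable_of_tendsto_atTop {F : ℝ → ℝ} (h : Tendsto F atTop atTop) :
    ¬ Integrable F := by
  intro hint
  obtain ⟨M, hM⟩ := (h.eventually_ge_atTop 1).exists_forall_of_atTop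
  have h1 : IntegrableOn (fun _ : ℝ => (1:ℝ)) (Ioi M) := by
    refine (hint.integrableOn).mono' aestronglyMeasurable_const ?_
    refine (ae_restrict_iff' measurableSet_Ioi).2 (ae_of_all _ fun x hx => ?_)
    simpa using hM x (le_of_lt hx)
  rw [integrableOn_const_iff] at h1
  simp [Real.volume_Ioi] at h1

lemma not_integrable_of_tendsto_atBot' {F : ℝ → ℝ} (h : Tendsto F atBot atTop) :
    ¬ Integrable F volume := by
  intro hint
  obtain ⟨M, hM⟩ := (h.eventually_ge_atTop 1).exists_forall_of_atBot
  have h1 : IntegrableOn (fun _ : ℝ => (1:ℝ)) (Iio M) := by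
    refine (hint.integrableOn).mono' aestronglyMeasurable_const ?_
    refine (ae_restrict_iff' measurableSet_Iio).2 (ae_of_all _ fun x hx => ?_)
    simpa using hM x (le_of_lt hx)
  rw [integrableOn_const_iff] at h1
  simp [Real.volume_Iio] at h1

lemma stein (f : ℝ → ℝ) (hf : Differentiable ℝ f)
    (hf2 : Integrable (fun x => f x ^ 2) (gaussianReal 0 1))
    (hf' : Integrable (fun x => deriv f x) (gaussianReal 0 1))
    (hxf : Integrable (fun x => x * f x) (gaussianReal 0 1)) :
    ∫ x, deriv f x ∂(gaussianReal 0 1) = ∫ x, x * f x ∂(gaussianReal 0 1) := by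
  set g : ℝ → ℝ := fun x => f x * gphi x with hgdef
  set h : ℝ → ℝ := fun x => deriv f x * gphi x - x * f x * gphi x with hhdef
  have hg : ∀ x, HasDerivAt g (h x) x := by
    intro x
    have := ((hf x).hasDerivAt).mul (gphi_hasDeriv x)
    exact this.congr_deriv (by simp only [hhdef]; ring)
  have hh : Integrable h volume := by
    have h1 := (integrable_gauss_iff _).1 hf'
    have h2 := (integrable_gauss_iff _).1 hxf
    exact h1.sub h2
  have hfsq : Integrable (fun x => f x ^ 2 * gphi x) volume := (integrable_gauss_iff _).1 hf2
  -- limit of g at +∞ exists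
  have key : ∀ x : ℝ, g x = g 0 + ∫ t in (0:ℝ)..x, h t := by
    intro x
    rw [intervalIntegral.integral_eq_sub_of_hasDerivAt (fun t _ => hg t)
      hh.intervalIntegrable]
    ring
  have htop : Tendsto g atTop (nhds (g 0 + ∫ t in Ioi (0:ℝ), h t)) := by
    have := (intervalIntegral_tendsto_integral_Ioi 0 hh.integrableOn tendsto_id).const_add (g 0)
    exact this.congr fun x => (key x).symm
  have hbot : Tendsto g atBot (nhds (g 0 - ∫ t in Iic (0:ℝ), h t)) := by
    have h2 := (intervalIntegral_tendsto_integral_Iic 0 hh.integrableOn tendsto_id).const_sub (g 0)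
    refine h2.congr fun x => ?_
    simp only [id_eq]
    rw [intervalIntegral.integral_symm 0 x, key x]
    ring
  -- the limits are zero
  have hzero : ∀ (l : Filter ℝ) (L : ℝ), l = atTop ∨ l = atBot → Tendsto g l (nhds L) →
      Tendsto gphi l (nhds 0) → L = 0 := by
    intro l L hl hgL hphil
    by_contra hL
    have hg2 : Tendsto (fun x => g x ^ 2) l (nhds (L ^ 2)) := hgL.pow 2
    have hphi' : Tendsto gphi l (nhdsWithin 0 (Ioi 0)) :=
      tendsto_nhdsWithin_iff.2 ⟨hphil, Eventually.of_forall fun x => gphi_pos x⟩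
    have hinv : Tendsto (fun x => (gphi x)⁻¹) l atTop := hphi'.inv_tendsto_nhdsGT_zero
    have hmul : Tendsto (fun x => g x ^ 2 * (gphi x)⁻¹) l atTop :=
      hg2.pos_mul_atTop (pow_pos (abs_pos.2 hL) 2 |>.trans_eq (sq_abs L)) hinv
    have heq : (fun x => g x ^ 2 * (gphi x)⁻¹) = fun x => f x ^ 2 * gphi x := by
      funext x
      field_simp [hgdef, (gphi_pos x).ne']
      ring
    rw [heq] at hmul
    rcases hl with rfl | rfl
    · exact not_integrable_of_tendsto_atTop hmul hfsq
    · exact not_integrable_of_tendsto_atBot' hmul hfsq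
  have hLtop : (g 0 + ∫ t in Ioi (0:ℝ), h t) = 0 :=
    hzero atTop _ (Or.inl rfl) htop gphi_tendsto_atTop
  have hLbot : (g 0 - ∫ t in Iic (0:ℝ), h t) = 0 :=
    hzero atBot _ (Or.inr rfl) hbot gphi_tendsto_atBot
  have hint0 : ∫ t, h t = 0 := by
    rw [← intervalIntegral.integral_Iic_add_Ioi hh.integrableOn hh.integrableOn]
    linarith
  have := integral_sub ((integrable_gauss_iff _).1 hf') ((integrable_gauss_iff _).1 hxf)
  rw [integral_gauss_eq, integral_gauss_eq (fun x => x * f x)]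
  have : (∫ x, deriv f x * gphi x) - ∫ x, x * f x * gphi x = 0 := by
    rw [← this]; exact hint0
  linarith

lemma integrable_sq_gauss : Integrable (fun x : ℝ => x ^ 2) (gaussianReal 0 1) := by
  rw [integrable_gauss_iff]
  have h0 := integrable_rpow_mul_exp_neg_mul_sq (by norm_num : (0:ℝ) < 1/2)
    (by norm_num : (-1:ℝ) < 2)
  have heq : (fun x : ℝ => x ^ 2 * gphi x)
      = fun x => (Real.sqrt (2 * π))⁻¹ * (x ^ (2:ℝ) * Real.exp (-(1/2) * x ^ 2)) := by
    funext x
    rw [gphi_def, show (2:ℝ) = ((2:ℕ):ℝ) by norm_num, Real.rpow_natCast]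
    push_cast
    ring_nf
  rw [heq]
  exact h0.const_mul _

lemma integral_sq_gauss : ∫ x, x ^ 2 ∂(gaussianReal 0 1) = 1 := by
  have hs := stein (fun x => x) differentiable_id
    (by simpa using integrable_sq_gauss)
    (by simp only [deriv_id'']; exact integrable_const 1)
    (integrable_sq_gauss.congr (ae_of_all _ fun x => pow_two x))
  simp only [deriv_id''] at hs
  have h1 : ∫ (_ : ℝ), (1:ℝ) ∂(gaussianReal 0 1) = 1 := by simp
  rw [h1] at hs
  have : ∫ x, x * x ∂(gaussianReal 0 1) = ∫ x, x ^ 2 ∂(gaussianReal 0 1) := by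
    congr 1; funext x; ring
  rw [this] at hs
  exact hs.symm

/-- Equality case of θ₂(f) ≤ θ₁(f): `E[f'(N)]² = E[f(N)²]` iff `f(x) = αx`
(Gaussian-almost everywhere) for some real `α`. -/
theorem gaussian_deriv_sq_eq_sq_iff (f : ℝ → ℝ)
    (hf : Differentiable ℝ f)
    (hmean : ∫ x, f x ∂(gaussianReal 0 1) = 0)
    (hf2 : Integrable (fun x => (f x) ^ 2) (gaussianReal 0 1))
    (hf' : Integrable (fun x => deriv f x) (gaussianReal 0 1)) :
    (∫ x, deriv f x ∂(gaussianReal 0 1)) ^ 2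
        = ∫ x, (f x) ^ 2 ∂(gaussianReal 0 1)
      ↔ ∃ α : ℝ, f =ᵐ[gaussianReal 0 1] fun x => α * x := by
  set γ := gaussianReal 0 1 with hγ
  have hfm : MemLp f 2 γ :=
    (memLp_two_iff_integrable_sq hf.continuous.aestronglyMeasurable).2 hf2
  have hidm : MemLp (fun x : ℝ => x) 2 γ :=
    (memLp_two_iff_integrable_sq continuous_id.aestronglyMeasurable).2 integrable_sq_gauss
  have hxf : Integrable (fun x => x * f x) γ := by
    have h := hfm.smul (φ := fun x : ℝ => x) hidm
      (r := 1) (hpqr := ⟨by simp [ENNReal.inv_two_add_inv_two]⟩)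
    exact (memLp_one_iff_integrable.1 h).congr (ae_of_all _ fun x => rfl)
  have hstein := stein f hf hf2 hf' hxf
  constructor
  · intro heq
    set α := ∫ x, x * f x ∂γ with hα
    refine ⟨α, ?_⟩
    rw [hstein] at heq
    -- ∫ (f x - α x)^2 = 0
    have hint : Integrable (fun x => (f x - α * x) ^ 2) γ := by
      have h1 : Integrable (fun x => f x ^ 2 - 2 * α * (x * f x) + α ^ 2 * x ^ 2) γ :=
        Integrable.add (hf2.sub (hxf.const_mul (2 * α))) (integrable_sq_gauss.const_mul (α ^ 2))
      exact h1.congr (ae_of_all _ fun x => by ring)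
    have hzero : ∫ x, (f x - α * x) ^ 2 ∂γ = 0 := by
      have hexp : ∫ x, (f x - α * x) ^ 2 ∂γ
          = ∫ x, (f x ^ 2 - 2 * α * (x * f x) + α ^ 2 * x ^ 2) ∂γ := by
        congr 1; funext x; ring
      have i1 : ∫ x, (f x ^ 2 - 2 * α * (x * f x) + α ^ 2 * x ^ 2) ∂γ
          = (∫ x, f x ^ 2 ∂γ) - (∫ x, 2 * α * (x * f x) ∂γ) + ∫ x, α ^ 2 * x ^ 2 ∂γ := by
        have hsub : Integrable (fun x => f x ^ 2 - 2 * α * (x * f x)) γ :=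
          hf2.sub (hxf.const_mul (2 * α))
        have hmul : Integrable (fun x : ℝ => α ^ 2 * x ^ 2) γ :=
          integrable_sq_gauss.const_mul (α ^ 2)
        rw [integral_add hsub hmul, integral_sub hf2 (hxf.const_mul (2 * α))]
      have i2 : ∫ x, 2 * α * (x * f x) ∂γ = 2 * α * α := by
        rw [integral_const_mul, ← hα]
      have i3 : ∫ x, α ^ 2 * x ^ 2 ∂γ = α ^ 2 := by
        rw [integral_const_mul, integral_sq_gauss, mul_one]
      rw [hexp, i1, i2, i3, ← heq]
      ring
    have := (integral_eq_zero_iff_of_nonneg (fun x => sq_nonneg _) hint).1 hzero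
    filter_upwards [this] with x hx
    have : f x - α * x = 0 := by
      have := pow_eq_zero_iff (n := 2) (by norm_num) |>.1 hx
      exact this
    linarith
  · rintro ⟨α, hae⟩
    have hvol : f =ᵐ[volume] fun x => α * x :=
      (gaussianReal_absolutelyContinuous' 0 one_ne_zero).ae_eq hae
    have hfeq : f = fun x => α * x :=
      (Continuous.ae_eq_iff_eq volume hf.continuous (by continuity)).1 hvol
    subst hfeq
    have hderiv : (fun x => deriv (fun y => α * y) x) = fun _ : ℝ => α := by
      funext x
      rw [deriv_const_mul_field]
      simp
    rw [hderiv]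
    have h1 : ∫ (_ : ℝ), α ∂γ = α := by simp
    rw [h1]
    have h2 : ∫ x, (α * x) ^ 2 ∂γ = α ^ 2 := by
      have : (fun x : ℝ => (α * x) ^ 2) = fun x => α ^ 2 * x ^ 2 := by funext x; ring
      rw [this, integral_const_mul, integral_sq_gauss, mul_one]
    rw [h2]
end

section
/- For a standard Gaussian random variable N and twice differentiable f with E[f(N)] = 0, equality E[(1/2)f''(N)]² = (1/2)E[f(N)²] holds if and only if f(x) = α(x² − 1) for some real α (almost everywhere with respect to the Gaussian measure). -/
open MeasureTheory ProbabilityTheory Real Filter Set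
open scoped ENNReal NNReal Topology

namespace GaussAux

noncomputable def φ : ℝ → ℝ := gaussianPDFReal 0 1

lemma phi_eq (x : ℝ) : φ x = (√(2 * π))⁻¹ * rexp (-x ^ 2 / 2) := by
  simp [φ, gaussianPDFReal]

lemma phi_pos (x : ℝ) : 0 < φ x := gaussianPDFReal_pos 0 1 x one_ne_zero

lemma continuous_phi : Continuous φ := by
  simp only [funext phi_eq]
  fun_prop

lemma hasDerivAt_phi (x : ℝ) : HasDerivAt φ (-x * φ x) x := by
  have h1 : HasDerivAt (fun x : ℝ => -x ^ 2 / 2) (-x) x := by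
    have := ((hasDerivAt_pow 2 x).neg).div_const 2
    refine this.congr_deriv ?_; push_cast; ring
  have h2 := (h1.exp).const_mul (√(2 * π))⁻¹
  simp only [funext phi_eq]
  refine h2.congr_deriv ?_
  ring

lemma phi_anti {s t : ℝ} (hs : 0 ≤ s) (hst : s ≤ t) : φ t ≤ φ s := by
  rw [phi_eq, phi_eq]
  have : rexp (-t ^ 2 / 2) ≤ rexp (-s ^ 2 / 2) := Real.exp_le_exp.2 (by nlinarith)
  have h0 : (0:ℝ) ≤ (√(2 * π))⁻¹ := by positivity
  nlinarith [Real.exp_pos (-t^2/2)]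

lemma phi_even (x : ℝ) : φ (-x) = φ x := by rw [phi_eq, phi_eq]; ring_nf


lemma measurable_phi : Measurable φ := measurable_gaussianPDFReal 0 1

lemma gaussianReal_eq : gaussianReal 0 1
    = (volume : Measure ℝ).withDensity (fun x => ((φ x).toNNReal : ℝ≥0∞)) := by
  rw [gaussianReal_of_var_ne_zero 0 one_ne_zero]
  congr 1

lemma integral_gr (g : ℝ → ℝ) :
    ∫ x, g x ∂(gaussianReal 0 1) = ∫ x, g x * φ x := by
  rw [gaussianReal_eq, integral_withDensity_eq_integral_smul measurable_phi.real_toNNReal]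
  congr 1
  funext x
  simp [NNReal.smul_def, Real.coe_toNNReal _ (phi_pos x).le, mul_comm]

lemma integrable_gr_iff (g : ℝ → ℝ) :
    Integrable g (gaussianReal 0 1) ↔ Integrable (fun x => g x * φ x) volume := by
  rw [gaussianReal_eq, integrable_withDensity_iff (measurable_phi.real_toNNReal.coe_nnreal_ennreal)
    (ae_of_all _ fun x => ENNReal.coe_lt_top)]
  constructor <;> intro h <;> refine h.congr (ae_of_all _ fun x => ?_) <;>
    simp [Real.coe_toNNReal _ (phi_pos x).le]


lemma integrable_even_poly_exp (n : ℕ) :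
    Integrable (fun x : ℝ => (x ^ 2) ^ n * rexp (-x ^ 2 / 2)) := by
  have hdom : Integrable (fun x : ℝ =>
      ((4:ℝ) ^ n * (n.factorial : ℝ)) * rexp (-(4:ℝ)⁻¹ * x ^ 2)) :=
    (integrable_exp_neg_mul_sq (by norm_num : (0:ℝ) < 4⁻¹)).const_mul _
  refine hdom.mono' (Continuous.aestronglyMeasurable (by fun_prop)) (ae_of_all _ fun x => ?_)
  have h0 : (0:ℝ) ≤ x ^ 2 / 4 := by positivity
  have h1 : (x ^ 2 / 4) ^ n / (n.factorial : ℝ) ≤ rexp (x ^ 2 / 4) :=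
    Real.pow_div_factorial_le_exp _ h0 n
  have hfac : (0:ℝ) < (n.factorial : ℝ) := by
    exact_mod_cast n.factorial_pos
  have h3 : (x ^ 2) ^ n ≤ 4 ^ n * (n.factorial : ℝ) * rexp (x ^ 2 / 4) := by
    have h2 : (x ^ 2 / 4) ^ n ≤ rexp (x ^ 2 / 4) * (n.factorial : ℝ) :=
      (div_le_iff₀ hfac).1 h1
    have h4 : (x ^ 2) ^ n = 4 ^ n * (x ^ 2 / 4) ^ n := by
      rw [div_pow]; field_simp
    have h5 : (0:ℝ) ≤ (4:ℝ) ^ n := by positivity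
    nlinarith [mul_le_mul_of_nonneg_left h2 h5]
  have hexp : rexp (x ^ 2 / 4) * rexp (-x ^ 2 / 2) = rexp (-(4:ℝ)⁻¹ * x ^ 2) := by
    rw [← Real.exp_add]; ring_nf
  rw [Real.norm_eq_abs, abs_of_nonneg (by positivity)]
  calc (x ^ 2) ^ n * rexp (-x ^ 2 / 2)
      ≤ (4 ^ n * (n.factorial : ℝ) * rexp (x ^ 2 / 4)) * rexp (-x ^ 2 / 2) :=
        mul_le_mul_of_nonneg_right h3 (Real.exp_pos _).le
    _ = 4 ^ n * (n.factorial : ℝ) * rexp (-(4:ℝ)⁻¹ * x ^ 2) := by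
        rw [mul_assoc, hexp]

lemma abs_pow_le (n : ℕ) (x : ℝ) : |x| ^ n ≤ (x ^ 2) ^ n + 1 := by
  rcases le_total (|x|) 1 with h | h
  · have h1 : |x| ^ n ≤ 1 := pow_le_one₀ (abs_nonneg x) h
    have h2 : (0:ℝ) ≤ (x ^ 2) ^ n := by positivity
    linarith
  · have h2 : |x| ^ n ≤ (|x| ^ 2) ^ n := by
      rw [← pow_mul]
      exact pow_le_pow_right₀ h (by omega)
    have h3 : (0:ℝ) ≤ (x ^ 2) ^ n := by positivity
    calc |x| ^ n ≤ (|x| ^ 2) ^ n := h2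
      _ = (x ^ 2) ^ n := by rw [sq_abs]
      _ ≤ (x ^ 2) ^ n + 1 := by linarith

lemma integrable_pow_phi (n : ℕ) : Integrable fun x : ℝ => x ^ n * φ x := by
  have hdom : Integrable (fun x : ℝ =>
      ((x ^ 2) ^ n * rexp (-x ^ 2 / 2) + (x ^ 2) ^ 0 * rexp (-x ^ 2 / 2)) * (√(2 * π))⁻¹) :=
    ((integrable_even_poly_exp n).add (integrable_even_poly_exp 0)).mul_const _
  refine hdom.mono' (((continuous_pow n).mul continuous_phi).aestronglyMeasurable) (ae_of_all _ fun x => ?_)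
  rw [Real.norm_eq_abs, abs_mul, abs_pow, phi_eq]
  have h1 : |φ x| = φ x := abs_of_pos (phi_pos x)
  rw [phi_eq] at h1
  rw [h1]
  have h2 := abs_pow_le n x
  have h3 : (0:ℝ) < rexp (-x ^ 2 / 2) := Real.exp_pos _
  have h4 : (0:ℝ) ≤ (√(2 * π))⁻¹ := by positivity
  have h5 : (0:ℝ) ≤ rexp (-x ^ 2 / 2) * (√(2 * π))⁻¹ := by positivity
  calc |x| ^ n * ((√(2 * π))⁻¹ * rexp (-x ^ 2 / 2))
      ≤ ((x ^ 2) ^ n + 1) * ((√(2 * π))⁻¹ * rexp (-x ^ 2 / 2)) := by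
        exact mul_le_mul_of_nonneg_right h2 (by positivity)
    _ = ((x ^ 2) ^ n * rexp (-x ^ 2 / 2) + (x ^ 2) ^ 0 * rexp (-x ^ 2 / 2)) * (√(2 * π))⁻¹ := by
        ring

lemma tendsto_even_poly_exp_top (n : ℕ) :
    Tendsto (fun x : ℝ => (x ^ 2) ^ n * rexp (-x ^ 2 / 2)) atTop (𝓝 0) := by
  have h1 : Tendsto (fun t : ℝ => t ^ n * rexp (-t)) atTop (𝓝 0) :=
    tendsto_pow_mul_exp_neg_atTop_nhds_zero n
  have h2 : Tendsto (fun x : ℝ => x ^ 2 / 2) atTop atTop :=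
    (tendsto_pow_atTop two_ne_zero).atTop_div_const (by norm_num)
  have h3 := h1.comp h2
  have h4 := h3.const_mul ((2:ℝ) ^ n)
  rw [mul_zero] at h4
  refine h4.congr fun x => ?_
  simp only [Function.comp]
  rw [div_pow]
  have : rexp (-(x ^ 2 / 2)) = rexp (-x ^ 2 / 2) := by ring_nf
  rw [this]
  field_simp

lemma tendsto_abs_pow_phi_top (n : ℕ) :
    Tendsto (fun x : ℝ => |x| ^ n * φ x) atTop (𝓝 0) := by
  have hb : Tendsto (fun x : ℝ =>
      ((x ^ 2) ^ n * rexp (-x ^ 2 / 2) + (x ^ 2) ^ 0 * rexp (-x ^ 2 / 2)) * (√(2 * π))⁻¹)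
      atTop (𝓝 0) := by
    have := ((tendsto_even_poly_exp_top n).add (tendsto_even_poly_exp_top 0)).mul_const
      ((√(2 * π))⁻¹)
    simpa using this
  refine squeeze_zero (fun x => mul_nonneg (by positivity) (phi_pos x).le) (fun x => ?_) hb
  rw [phi_eq]
  have h2 := abs_pow_le n x
  calc |x| ^ n * ((√(2 * π))⁻¹ * rexp (-x ^ 2 / 2))
      ≤ ((x ^ 2) ^ n + 1) * ((√(2 * π))⁻¹ * rexp (-x ^ 2 / 2)) :=
        mul_le_mul_of_nonneg_right h2 (by positivity)
    _ = ((x ^ 2) ^ n * rexp (-x ^ 2 / 2) + (x ^ 2) ^ 0 * rexp (-x ^ 2 / 2)) * (√(2 * π))⁻¹ := by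
        ring

lemma tendsto_abs_pow_phi_bot (n : ℕ) :
    Tendsto (fun x : ℝ => |x| ^ n * φ x) atBot (𝓝 0) := by
  have h := (tendsto_abs_pow_phi_top n).comp tendsto_neg_atBot_atTop
  refine h.congr fun x => ?_
  simp only [Function.comp]
  rw [abs_neg, phi_even]

lemma tendsto_pow_phi_top (n : ℕ) : Tendsto (fun x : ℝ => x ^ n * φ x) atTop (𝓝 0) :=
  squeeze_zero_norm (fun x => by
    rw [Real.norm_eq_abs, abs_mul, abs_pow, abs_of_pos (phi_pos x)])
    (tendsto_abs_pow_phi_top n)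

lemma tendsto_pow_phi_bot (n : ℕ) : Tendsto (fun x : ℝ => x ^ n * φ x) atBot (𝓝 0) :=
  squeeze_zero_norm (fun x => by
    rw [Real.norm_eq_abs, abs_mul, abs_pow, abs_of_pos (phi_pos x)])
    (tendsto_abs_pow_phi_bot n)


lemma exists_tail_lt {g : ℝ → ℝ} (hg : Integrable g) {ε : ℝ} (hε : 0 < ε) :
    ∃ X : ℝ, 0 ≤ X ∧ ∫ t in Ici X, ‖g t‖ < ε := by
  have L : Tendsto (fun n : ℕ => ∫ t in Ici (n : ℝ), ‖g t‖) atTop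
      (𝓝 (∫ t in ⋂ n : ℕ, Ici ((n : ℕ) : ℝ), ‖g t‖)) :=
    tendsto_setIntegral_of_antitone (fun _ => measurableSet_Ici)
      (fun m n hmn => Ici_subset_Ici.2 (Nat.cast_le.2 hmn))
      ⟨0, hg.norm.integrableOn⟩
  have hempty : ⋂ n : ℕ, Ici ((n : ℕ) : ℝ) = (∅ : Set ℝ) := by
    ext x
    simp only [mem_iInter, mem_Ici, mem_empty_iff_false, iff_false, not_forall, not_le]
    obtain ⟨n, hn⟩ := exists_nat_gt x
    exact ⟨n, hn⟩
  rw [hempty] at L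
  simp only [Measure.restrict_empty, integral_zero_measure] at L
  obtain ⟨n, hn⟩ := (L.eventually (gt_mem_nhds hε)).exists
  exact ⟨(n : ℝ), Nat.cast_nonneg n, hn⟩


lemma intervalIntegrable_of_mul_phi {g : ℝ → ℝ} (hgm : Measurable g)
    (hI : Integrable (fun x => g x * φ x)) (a b : ℝ) :
    IntervalIntegrable g volume a b := by
  rw [intervalIntegrable_iff]
  have h1 : IntegrableOn (fun t => (φ t)⁻¹ * (g t * φ t)) (uIcc a b) := by
    apply (hI.integrableOn).continuousOn_mul ?_ isCompact_uIcc
    exact (continuous_phi.inv₀ (fun x => (phi_pos x).ne')).continuousOn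
  have h2 : IntegrableOn g (uIcc a b) := by
    refine h1.congr_fun (fun t _ => ?_) measurableSet_uIcc
    field_simp [(phi_pos t).ne']
  exact h2.mono_set Set.uIoc_subset_uIcc

lemma tendsto_mul_phi_top_of_deriv (g : ℝ → ℝ) (hg : Differentiable ℝ g)
    (hI : Integrable (fun x => deriv g x * φ x)) :
    Tendsto (fun x => g x * φ x) atTop (𝓝 0) := by
  have hD : ∀ t, ‖deriv g t * φ t‖ = |deriv g t| * φ t := fun t => by
    rw [Real.norm_eq_abs, abs_mul, abs_of_pos (phi_pos t)]
  have hgm : Measurable (deriv g) := measurable_deriv g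
  have hloc : ∀ a b : ℝ, IntervalIntegrable (deriv g) volume a b :=
    intervalIntegrable_of_mul_phi hgm hI
  have hphi0 : Tendsto φ atTop (𝓝 0) := by
    have := tendsto_pow_phi_top 0
    simpa using this
  rw [NormedAddCommGroup.tendsto_nhds_zero]
  intro ε hε
  obtain ⟨X, hX0, hXtail⟩ := exists_tail_lt hI (half_pos hε)
  set C := ∫ t in (0:ℝ)..X, |deriv g t| with hC
  have hlim : Tendsto (fun x => (|g 0| + C) * φ x) atTop (𝓝 0) := by
    simpa using hphi0.const_mul (|g 0| + C)
  filter_upwards [hlim.eventually (gt_mem_nhds (half_pos hε)), eventually_ge_atTop X]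
    with x hx1 hx2
  have hx0 : (0:ℝ) ≤ x := hX0.trans hx2
  have hftc : g x - g 0 = ∫ t in (0:ℝ)..x, deriv g t :=
    (intervalIntegral.integral_deriv_eq_sub (fun t _ => hg t) (hloc 0 x)).symm
  have habs : |∫ t in (0:ℝ)..x, deriv g t| ≤ ∫ t in (0:ℝ)..x, |deriv g t| :=
    intervalIntegral.abs_integral_le_integral_abs hx0
  have hsplit : ∫ t in (0:ℝ)..x, |deriv g t| = C + ∫ t in X..x, |deriv g t| :=
    (intervalIntegral.integral_add_adjacent_intervals (hloc 0 X).abs (hloc X x).abs).symm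
  have hmono : (∫ t in X..x, |deriv g t|) * φ x ≤ ∫ t in X..x, |deriv g t| * φ t := by
    rw [← intervalIntegral.integral_mul_const]
    refine intervalIntegral.integral_mono_on hx2 ((hloc X x).abs.mul_const _)
      ((hI.norm.congr (ae_of_all _ fun t => hD t)).intervalIntegrable)
      (fun t ht => ?_)
    exact mul_le_mul_of_nonneg_left (phi_anti (hX0.trans ht.1) ht.2) (abs_nonneg _)
  have hIciEq : ∫ t in Ici X, ‖deriv g t * φ t‖ = ∫ t in Ici X, |deriv g t| * φ t :=
    integral_congr_ae (ae_of_all _ fun t => hD t)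
  have htail : ∫ t in X..x, |deriv g t| * φ t ≤ ∫ t in Ici X, ‖deriv g t * φ t‖ := by
    rw [intervalIntegral.integral_of_le hx2, hIciEq]
    refine setIntegral_mono_set ((hI.norm.congr (ae_of_all _ fun t => hD t)).integrableOn) ?_ ?_
    · exact ae_of_all _ fun t => mul_nonneg (abs_nonneg _) (phi_pos t).le
    · exact HasSubset.Subset.eventuallyLE (Set.Ioc_subset_Ioi_self.trans Set.Ioi_subset_Ici_self)
  have key : ‖g x * φ x‖ ≤ (|g 0| + C) * φ x + ∫ t in Ici X, ‖deriv g t * φ t‖ := by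
    have h1 : |g x| ≤ |g 0| + ∫ t in (0:ℝ)..x, |deriv g t| := by
      have : g x = g 0 + ∫ t in (0:ℝ)..x, deriv g t := by linarith [hftc]
      calc |g x| ≤ |g 0| + |∫ t in (0:ℝ)..x, deriv g t| := by
            rw [this]; exact abs_add_le _ _
        _ ≤ |g 0| + ∫ t in (0:ℝ)..x, |deriv g t| := by linarith
    calc ‖g x * φ x‖ = |g x| * φ x := by
          rw [Real.norm_eq_abs, abs_mul, abs_of_pos (phi_pos x)]
      _ ≤ (|g 0| + ∫ t in (0:ℝ)..x, |deriv g t|) * φ x :=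
          mul_le_mul_of_nonneg_right h1 (phi_pos x).le
      _ = (|g 0| + C) * φ x + (∫ t in X..x, |deriv g t|) * φ x := by
          rw [hsplit]; ring
      _ ≤ (|g 0| + C) * φ x + ∫ t in Ici X, ‖deriv g t * φ t‖ := by
          have := hmono.trans htail
          linarith
  calc ‖g x * φ x‖ ≤ (|g 0| + C) * φ x + ∫ t in Ici X, ‖deriv g t * φ t‖ := key
    _ < ε / 2 + ε / 2 := by
        have h2 : (|g 0| + C) * φ x < ε / 2 := by
          have := hx1; simpa using this
        exact add_lt_add h2 hXtail
    _ = ε := by ring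


lemma integrable_mul_f {f q : ℝ → ℝ} (hfc : Continuous f) (hqc : Continuous q)
    (hf2 : Integrable (fun x => f x ^ 2 * φ x)) (hq2 : Integrable (fun x => q x ^ 2 * φ x)) :
    Integrable (fun x => q x * (f x * φ x)) := by
  refine ((hf2.add hq2).div_const 2).mono'
    ((hqc.mul (hfc.mul continuous_phi)).aestronglyMeasurable) (ae_of_all _ fun x => ?_)
  rw [Real.norm_eq_abs, abs_mul, abs_mul, abs_of_pos (phi_pos x)]
  have h1 := sq_nonneg (|q x| - |f x|)
  have h2 := (phi_pos x).le
  have h3 : |q x| ^ 2 = q x ^ 2 := sq_abs _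
  have h4 : |f x| ^ 2 = f x ^ 2 := sq_abs _
  simp only [Pi.add_apply]
  nlinarith [mul_nonneg (mul_nonneg (abs_nonneg (q x)) (abs_nonneg (f x))) h2,
    mul_le_mul_of_nonneg_right h1 h2]

lemma integrable_one_sub_sq_sq_phi : Integrable (fun x : ℝ => (1 - x ^ 2) ^ 2 * φ x) := by
  have h := ((integrable_pow_phi 4).add ((integrable_pow_phi 2).const_mul (-2))).add
    (integrable_pow_phi 0)
  refine h.congr (ae_of_all _ fun x => ?_)
  simp only [Pi.add_apply]
  ring

lemma integrable_u' {f : ℝ → ℝ} (hfc : Continuous f)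
    (hf2 : Integrable (fun x => f x ^ 2 * φ x))
    (hf'' : Integrable (fun x => deriv (deriv f) x * φ x)) :
    Integrable (fun x => deriv (deriv f) x * φ x + (1 - x ^ 2) * (f x * φ x)) :=
  hf''.add (integrable_mul_f hfc (by fun_prop) hf2 integrable_one_sub_sq_sq_phi)

lemma hasDerivAt_u {f : ℝ → ℝ} (hf : Differentiable ℝ f) (hf' : Differentiable ℝ (deriv f))
    (x : ℝ) :
    HasDerivAt (fun x => deriv f x * φ x + x * (f x * φ x))
      (deriv (deriv f) x * φ x + (1 - x ^ 2) * (f x * φ x)) x := by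
  have h1 : HasDerivAt (deriv f) (deriv (deriv f) x) x := (hf' x).hasDerivAt
  have h2 : HasDerivAt f (deriv f x) x := (hf x).hasDerivAt
  have h3 : HasDerivAt (fun x => f x * φ x) (deriv f x * φ x + f x * (-x * φ x)) x :=
    h2.mul (hasDerivAt_phi x)
  have h4 : HasDerivAt (fun x => deriv f x * φ x)
      (deriv (deriv f) x * φ x + deriv f x * (-x * φ x)) x := h1.mul (hasDerivAt_phi x)
  have h5 : HasDerivAt (fun x => x * (f x * φ x))
      (1 * (f x * φ x) + x * (deriv f x * φ x + f x * (-x * φ x))) x :=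
    (hasDerivAt_id x).mul h3
  refine (h4.add h5).congr_deriv ?_
  ring

lemma key_top (f : ℝ → ℝ) (hf : Differentiable ℝ f) (hf' : Differentiable ℝ (deriv f))
    (hf2 : Integrable (fun x => f x ^ 2 * φ x))
    (hf'' : Integrable (fun x => deriv (deriv f) x * φ x)) :
    Tendsto (fun x => deriv f x * φ x + x * (f x * φ x)) atTop (𝓝 0) := by
  have hA : Tendsto (fun x => deriv f x * φ x) atTop (𝓝 0) :=
    tendsto_mul_phi_top_of_deriv (deriv f) hf' hf''
  set u := fun x => deriv f x * φ x + x * (f x * φ x) with hu_def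
  have hu'int := integrable_u' hf.continuous hf2 hf''
  have hu : Tendsto u atTop (𝓝 (limUnder atTop u)) :=
    tendsto_limUnder_of_hasDerivAt_of_integrableOn_Ioi (a := 0)
      (fun x _ => hasDerivAt_u hf hf' x) hu'int.integrableOn
  set L := limUnder atTop u with hL_def
  have hxf : Tendsto (fun x => x * (f x * φ x)) atTop (𝓝 L) := by
    have h := hu.sub hA
    rw [sub_zero] at h
    refine h.congr fun x => ?_
    simp only [hu_def]
    ring
  have hL0 : L = 0 := by
    by_contra hL
    have habsL : 0 < |L| := abs_pos.2 hL
    have hLsq : 0 < L ^ 2 := by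
      have : L ^ 2 = |L| ^ 2 := (sq_abs L).symm
      rw [this]; positivity
    have hev1 : ∀ᶠ x in atTop, |L| / 2 < |x * (f x * φ x)| :=
      hxf.abs (lt_mem_nhds (by linarith))
    have hev2 : ∀ᶠ x in atTop, x ^ 2 * φ x < L ^ 2 / 8 :=
      (tendsto_pow_phi_top 2) (gt_mem_nhds (by positivity))
    have hev : ∀ᶠ x in atTop, 1 ≤ f x ^ 2 * φ x := by
      filter_upwards [hev1, hev2, eventually_ge_atTop (1:ℝ)] with x h1 h2 hx1
      have hb : 0 < x ^ 2 * φ x := mul_pos (by positivity) (phi_pos x)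
      have hsq : (x * (f x * φ x)) ^ 2 = (f x ^ 2 * φ x) * (x ^ 2 * φ x) := by ring
      have ha : 0 ≤ f x ^ 2 * φ x := mul_nonneg (sq_nonneg _) (phi_pos x).le
      have h5 : L ^ 2 / 4 < (x * (f x * φ x)) ^ 2 := by
        nlinarith [sq_abs (x * (f x * φ x)), sq_abs L, abs_nonneg (x * (f x * φ x)),
          abs_nonneg L]
      nlinarith [mul_le_mul_of_nonneg_left h2.le ha]
    obtain ⟨M, hM⟩ := eventually_atTop.1 hev
    have hone : Integrable (fun _ : ℝ => (1:ℝ)) (volume.restrict (Ici M)) := by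
      refine (hf2.integrableOn (s := Ici M)).mono' aestronglyMeasurable_const ?_
      refine (ae_restrict_iff' measurableSet_Ici).2 (ae_of_all _ fun x hx => ?_)
      rw [norm_one]
      exact hM x hx
    rw [integrable_const_iff] at hone
    have := (hone.resolve_left one_ne_zero).measure_univ_lt_top; simp [Real.volume_Ici] at this
  rw [hL0] at hu
  exact hu


lemma key_bot (f : ℝ → ℝ) (hf : Differentiable ℝ f) (hf' : Differentiable ℝ (deriv f))
    (hf2 : Integrable (fun x => f x ^ 2 * φ x))
    (hf'' : Integrable (fun x => deriv (deriv f) x * φ x)) :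
    Tendsto (fun x => deriv f x * φ x + x * (f x * φ x)) atBot (𝓝 0) := by
  set F := fun x => f (-x) with hF_def
  have hF : Differentiable ℝ F := hf.comp differentiable_neg
  have hdF : deriv F = fun x => -deriv f (-x) := by
    funext x
    have h : HasDerivAt F (deriv f (-x) * (-1)) x :=
      (hf (-x)).hasDerivAt.comp x (hasDerivAt_neg x)
    rw [h.deriv]; ring
  have hdF' : Differentiable ℝ (deriv F) := by
    rw [hdF]
    exact ((hf'.comp differentiable_neg).neg)
  have hd2F : deriv (deriv F) = fun x => deriv (deriv f) (-x) := by
    funext x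
    rw [hdF]
    have h : HasDerivAt (fun x : ℝ => deriv f (-x)) (deriv (deriv f) (-x) * (-1)) x :=
      (hf' (-x)).hasDerivAt.comp x (hasDerivAt_neg x)
    rw [deriv.fun_neg, h.deriv]; ring
  have hF2 : Integrable (fun x => F x ^ 2 * φ x) := by
    have h := hf2.comp_neg
    refine h.congr (ae_of_all _ fun x => ?_)
    simp only [hF_def, phi_even]
  have hF'' : Integrable (fun x => deriv (deriv F) x * φ x) := by
    have h := hf''.comp_neg
    refine h.congr (ae_of_all _ fun x => ?_)
    rw [hd2F]
    simp only [phi_even]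
  have htop := key_top F hF hdF' hF2 hF''
  have hcomp := htop.comp tendsto_neg_atBot_atTop
  have heq : ((fun x => deriv F x * φ x + x * (F x * φ x)) ∘ Neg.neg)
      = fun x => -(deriv f x * φ x + x * (f x * φ x)) := by
    funext x
    simp only [Function.comp, hdF]
    simp only [Function.comp, hdF, hF_def, phi_even, neg_neg]
    ring
  rw [heq] at hcomp
  have := hcomp.neg
  rw [neg_zero] at this
  refine this.congr fun x => by ring

lemma ibp (f : ℝ → ℝ) (hf : Differentiable ℝ f) (hf' : Differentiable ℝ (deriv f))
    (hf2 : Integrable (fun x => f x ^ 2 * φ x))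
    (hf'' : Integrable (fun x => deriv (deriv f) x * φ x)) :
    ∫ x, deriv (deriv f) x * φ x = ∫ x, (x ^ 2 - 1) * (f x * φ x) := by
  have hu'int := integrable_u' hf.continuous hf2 hf''
  have h0 : ∫ x, (deriv (deriv f) x * φ x + (1 - x ^ 2) * (f x * φ x)) = 0 - 0 :=
    integral_of_hasDerivAt_of_tendsto (fun x => hasDerivAt_u hf hf' x) hu'int
      (key_bot f hf hf' hf2 hf'') (key_top f hf hf' hf2 hf'')
  have hq : Integrable (fun x => (1 - x ^ 2) * (f x * φ x)) :=
    integrable_mul_f hf.continuous (by fun_prop) hf2 integrable_one_sub_sq_sq_phi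
  rw [integral_add hf'' hq] at h0
  have h1 : ∫ x, (x ^ 2 - 1) * (f x * φ x) = -∫ x, (1 - x ^ 2) * (f x * φ x) := by
    rw [← integral_neg]
    congr 1
    funext x
    ring
  rw [h1]
  linarith


lemma integrable_phi : Integrable φ := by simpa using integrable_pow_phi 0

lemma integral_phi : ∫ x, φ x = 1 := integral_gaussianPDFReal_eq_one 0 one_ne_zero

lemma integral_sq_phi : ∫ x, x ^ 2 * φ x = 1 := by
  have hd : ∀ x : ℝ, HasDerivAt (fun x => x * φ x) (φ x - x ^ 2 * φ x) x := by
    intro x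
    have h := (hasDerivAt_id x).mul (hasDerivAt_phi x)
    refine h.congr_deriv ?_
    simp only [id]
    ring
  have hint : Integrable (fun x => φ x - x ^ 2 * φ x) := integrable_phi.sub (integrable_pow_phi 2)
  have hu : Integrable (fun x => x * φ x) := by simpa using integrable_pow_phi 1
  have h0 := integral_eq_zero_of_hasDerivAt_of_integrable hd hint hu
  rw [integral_sub integrable_phi (integrable_pow_phi 2), integral_phi] at h0
  linarith

lemma integral_pow4_phi : ∫ x, x ^ 4 * φ x = 3 := by
  have hd : ∀ x : ℝ, HasDerivAt (fun x => x ^ 3 * φ x) (3 * (x ^ 2 * φ x) - x ^ 4 * φ x) x := by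
    intro x
    have h := (hasDerivAt_pow 3 x).mul (hasDerivAt_phi x)
    refine h.congr_deriv ?_
    push_cast
    ring
  have hint : Integrable (fun x => 3 * (x ^ 2 * φ x) - x ^ 4 * φ x) :=
    ((integrable_pow_phi 2).const_mul 3).sub (integrable_pow_phi 4)
  have hu : Integrable (fun x => x ^ 3 * φ x) := integrable_pow_phi 3
  have h0 := integral_eq_zero_of_hasDerivAt_of_integrable hd hint hu
  rw [integral_sub ((integrable_pow_phi 2).const_mul 3) (integrable_pow_phi 4)] at h0
  have h2 : ∫ a : ℝ, 3 * (a ^ 2 * φ a) = 3 * ∫ a : ℝ, a ^ 2 * φ a := by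
    simpa [smul_eq_mul] using integral_smul (3:ℝ) (fun x : ℝ => x ^ 2 * φ x)
  rw [h2, integral_sq_phi] at h0
  linarith

lemma integral_H_sq_phi : ∫ x, (x ^ 2 - 1) ^ 2 * φ x = 2 := by
  have h1 : (fun x : ℝ => (x ^ 2 - 1) ^ 2 * φ x)
      = fun x => x ^ 4 * φ x - 2 * (x ^ 2 * φ x) + φ x := by
    funext x; ring
  have hA : Integrable (fun x : ℝ => x ^ 4 * φ x - 2 * (x ^ 2 * φ x)) :=
    (integrable_pow_phi 4).sub ((integrable_pow_phi 2).const_mul 2)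
  rw [h1, integral_add hA integrable_phi,
    integral_sub (integrable_pow_phi 4) ((integrable_pow_phi 2).const_mul 2)]
  have h2 : ∫ a : ℝ, 2 * (a ^ 2 * φ a) = 2 * ∫ a : ℝ, a ^ 2 * φ a := by
    simpa [smul_eq_mul] using integral_smul (2:ℝ) (fun x : ℝ => x ^ 2 * φ x)
  rw [h2, integral_pow4_phi, integral_sq_phi, integral_phi]
  norm_num


lemma integral_H_sq_gr : ∫ x, (x ^ 2 - 1) ^ 2 ∂(gaussianReal 0 1) = 2 := by
  rw [integral_gr]
  exact integral_H_sq_phi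

lemma integrable_H_sq_phi : Integrable (fun x : ℝ => (x ^ 2 - 1) ^ 2 * φ x) :=
  integrable_one_sub_sq_sq_phi.congr (ae_of_all _ fun x => by ring_nf)

lemma ibp_gr (f : ℝ → ℝ) (hf : Differentiable ℝ f) (hf' : Differentiable ℝ (deriv f))
    (hf2 : Integrable (fun x => f x ^ 2) (gaussianReal 0 1))
    (hf'' : Integrable (fun x => deriv (deriv f) x) (gaussianReal 0 1)) :
    ∫ x, deriv (deriv f) x ∂(gaussianReal 0 1)
      = ∫ x, (x ^ 2 - 1) * f x ∂(gaussianReal 0 1) := by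
  have hf2v : Integrable (fun x => f x ^ 2 * φ x) := (integrable_gr_iff _).1 hf2
  have hf''v : Integrable (fun x => deriv (deriv f) x * φ x) := (integrable_gr_iff _).1 hf''
  rw [integral_gr, integral_gr, ibp f hf hf' hf2v hf''v]
  congr 1
  funext x
  ring

end GaussAux

open GaussAux

/-- Equality case of θ₃(f) ≤ θ₁(f)/2: `E[(1/2)f''(N)]² = (1/2)E[f(N)²]` iff
`f(x) = α(x² − 1)` (Gaussian-almost everywhere) for some real `α`. -/
theorem gaussian_second_deriv_sq_eq_iff (f : ℝ → ℝ)
    (hf : Differentiable ℝ f) (hf' : Differentiable ℝ (deriv f))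
    (hmean : ∫ x, f x ∂(gaussianReal 0 1) = 0)
    (hf2 : Integrable (fun x => (f x) ^ 2) (gaussianReal 0 1))
    (hf'' : Integrable (fun x => deriv (deriv f) x) (gaussianReal 0 1)) :
    (∫ x, (1 / 2 : ℝ) * deriv (deriv f) x ∂(gaussianReal 0 1)) ^ 2
        = (1 / 2) * ∫ x, (f x) ^ 2 ∂(gaussianReal 0 1)
      ↔ ∃ α : ℝ, f =ᵐ[gaussianReal 0 1] fun x => α * (x ^ 2 - 1) := by
  set γ := gaussianReal 0 1 with hγ
  have hf2v : Integrable (fun x => f x ^ 2 * φ x) := (integrable_gr_iff _).1 hf2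
  constructor
  · intro hEq
    have hIBP := ibp_gr f hf hf' hf2 hf''
    set I := ∫ x, (x ^ 2 - 1) * f x ∂γ with hI_def
    have hhalf : ∫ x, (1 / 2 : ℝ) * deriv (deriv f) x ∂γ = (1 / 2) * I := by
      rw [← hIBP]
      simpa [smul_eq_mul] using integral_smul ((1:ℝ)/2) (fun x => deriv (deriv f) x) (μ := γ)
    rw [hhalf] at hEq
    set α := I / 2 with hα_def
    have hfHγ : Integrable (fun x => (x ^ 2 - 1) * f x) γ := by
      rw [hγ, integrable_gr_iff]
      have h := integrable_mul_f hf.continuous (by fun_prop : Continuous fun x : ℝ => x ^ 2 - 1)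
        hf2v integrable_H_sq_phi
      exact h.congr (ae_of_all _ fun x => by ring)
    have hH2γ : Integrable (fun x => (x ^ 2 - 1) ^ 2) γ :=
      (integrable_gr_iff _).2 integrable_H_sq_phi
    have hintexp : Integrable (fun x => (f x - α * (x ^ 2 - 1)) ^ 2) γ := by
      have h := (hf2.sub (hfHγ.const_mul (2 * α))).add (hH2γ.const_mul (α ^ 2))
      refine h.congr (ae_of_all _ fun x => ?_)
      simp only [Pi.add_apply, Pi.sub_apply]
      ring
    have hzero : ∫ x, (f x - α * (x ^ 2 - 1)) ^ 2 ∂γ = 0 := by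
      have hrw : (fun x => (f x - α * (x ^ 2 - 1)) ^ 2)
          = fun x => (f x ^ 2 - 2 * α * ((x ^ 2 - 1) * f x)) + α ^ 2 * ((x ^ 2 - 1) ^ 2) := by
        funext x; ring
      have hA : Integrable (fun x => f x ^ 2 - 2 * α * ((x ^ 2 - 1) * f x)) γ :=
        hf2.sub (hfHγ.const_mul (2 * α))
      have hB : Integrable (fun x => α ^ 2 * ((x ^ 2 - 1) ^ 2)) γ := hH2γ.const_mul (α ^ 2)
      rw [hrw, integral_add hA hB, integral_sub hf2 (hfHγ.const_mul (2 * α))]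
      have h1 : ∫ x, 2 * α * ((x ^ 2 - 1) * f x) ∂γ = 2 * α * I := by
        exact integral_const_mul (2 * α) _
      have h2 : ∫ x, α ^ 2 * ((x ^ 2 - 1) ^ 2) ∂γ = α ^ 2 * 2 := by
        have := integral_smul (α ^ 2) (fun x : ℝ => (x ^ 2 - 1) ^ 2) (μ := γ)
        simp only [smul_eq_mul] at this
        rw [this, hγ, integral_H_sq_gr]
      rw [h1, h2]
      have h3 : ∫ x, f x ^ 2 ∂γ = 2 * α ^ 2 := by
        rw [hα_def]
        nlinarith [hEq]
      rw [h3]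
      ring
    have hnn : (0 : ℝ → ℝ) ≤ fun x => (f x - α * (x ^ 2 - 1)) ^ 2 :=
      fun x => by simpa using sq_nonneg (f x - α * (x ^ 2 - 1))
    have hae0 := (integral_eq_zero_iff_of_nonneg hnn hintexp).1 hzero
    refine ⟨α, ?_⟩
    filter_upwards [hae0] with x hx
    have hx' : (f x - α * (x ^ 2 - 1)) ^ 2 = 0 := hx
    have := pow_eq_zero_iff (two_ne_zero) |>.1 hx'
    linarith [this]
  · rintro ⟨α, hae⟩
    have haev : f =ᵐ[volume] fun x => α * (x ^ 2 - 1) :=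
      hae.filter_mono (gaussianReal_absolutelyContinuous' 0 one_ne_zero).ae_le
    have heq : f = fun x => α * (x ^ 2 - 1) :=
      (Continuous.ae_eq_iff_eq volume hf.continuous (by fun_prop)).1 haev
    subst heq
    have hd1 : deriv (fun x : ℝ => α * (x ^ 2 - 1)) = fun x => 2 * α * x := by
      funext x
      have h : HasDerivAt (fun x : ℝ => α * (x ^ 2 - 1)) (2 * α * x) x := by
        have h := ((hasDerivAt_pow 2 x).sub_const 1).const_mul α
        refine h.congr_deriv ?_
        push_cast
        ring
      exact h.deriv
    have hd2 : deriv (deriv (fun x : ℝ => α * (x ^ 2 - 1))) = fun _ => 2 * α := by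
      rw [hd1]
      funext x
      have h : HasDerivAt (fun x : ℝ => 2 * α * x) (2 * α) x := by
        have h := (hasDerivAt_id x).const_mul (2 * α)
        refine h.congr_deriv ?_
        ring
      exact h.deriv
    rw [hd2]
    have hLHS : ∫ _x, (1 / 2 : ℝ) * (2 * α) ∂γ = α := by
      rw [integral_const]
      simp [hγ]
    have hRHS : ∫ x, (α * (x ^ 2 - 1)) ^ 2 ∂γ = α ^ 2 * 2 := by
      have hrw : (fun x : ℝ => (α * (x ^ 2 - 1)) ^ 2)
          = fun x => α ^ 2 * ((x ^ 2 - 1) ^ 2) := by funext x; ring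
      rw [hrw]
      have := integral_smul (α ^ 2) (fun x : ℝ => (x ^ 2 - 1) ^ 2) (μ := γ)
      simp only [smul_eq_mul] at this
      rw [this, hγ, integral_H_sq_gr]
    rw [hLHS, hRHS]
    ring
end

section
/- The q-th moment of the Marchenko–Pastur distribution with shape parameter γ > 0 and scale θ equals θ^q · Σ_{l=1}^{q} (1/q)·C(q,l)·C(q,l−1)·γ^{q−l}. -/
set_option linter.unusedVariables false
set_option linter.unreachableTactic false
set_option linter.unusedTactic false
set_option maxHeartbeats 1000000

open MeasureTheory

/-- The Marchenko–Pastur distribution with shape `γ > 0` and scale `θ > 0`: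
an atom of mass `max (1 − 1/γ) 0` at `0` plus the absolutely continuous part
with density `√((u₊ − x)(x − u₋))/(2πγθx)` on `[u₋, u₊]`, `u± = θ(1 ± √γ)²`. -/
noncomputable def marchenkoPastur (γ θ : ℝ) : Measure ℝ :=
  ENNReal.ofReal (max (1 - 1 / γ) 0) • Measure.dirac 0 +
    volume.withDensity fun x =>
      ENNReal.ofReal
        (if θ * (1 - Real.sqrt γ) ^ 2 ≤ x ∧ x ≤ θ * (1 + Real.sqrt γ) ^ 2 then
          Real.sqrt ((θ * (1 + Real.sqrt γ) ^ 2 - x) * (x - θ * (1 - Real.sqrt γ) ^ 2)) /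
            (2 * Real.pi * γ * θ * x)
        else 0)

open Real Finset intervalIntegral Set
open scoped NNReal ENNReal


/-- Vandermonde variant. -/
lemma mp_vandermonde (q p : ℕ) (hp : p < q) :
    ∑ j ∈ range (p + 1), p.choose j * (q - p).choose (j + 1) = q.choose (p + 1) := by
  have hq : p + (q - p) = q := by omega
  have h := Nat.add_choose_eq p (q - p) (p + 1)
  rw [hq, Finset.Nat.sum_antidiagonal_eq_sum_range_succ_mk, Finset.sum_range_succ,
    Nat.choose_eq_zero_of_lt (by omega : p < p + 1), zero_mul, add_zero,
    ← Finset.sum_range_reflect] at h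
  rw [h]
  apply Finset.sum_congr rfl
  intro j hj
  simp only [Finset.mem_range] at hj
  have h1 : p + 1 - 1 - j = p - j := by omega
  have h2 : p + 1 - (p - j) = j + 1 := by omega
  rw [h1, h2, Nat.choose_symm (by omega : j ≤ p)]

lemma catalan_cast_real (j : ℕ) : (catalan j : ℝ) = ((2*j).choose j : ℝ) / (j+1) := by
  have h := succ_mul_catalan_eq_centralBinom j
  rw [Nat.centralBinom] at h
  have : ((j+1) * catalan j : ℝ) = ((2*j).choose j : ℝ) := by
    exact_mod_cast h
  field_simp at this ⊢
  try linarith [this]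

lemma mp_term (q p j : ℕ) (hp : p < q) (hj : j ≤ p) :
    (catalan j : ℝ) * ((q-1).choose (2*j)) * ((q-1-2*j).choose (p-j))
      = (p.choose j : ℝ) * ((q-p).choose (j+1)) * ((q-1).factorial) / ((p.factorial) * ((q-p).factorial)) := by
  by_cases h1 : 2*j ≤ q - 1
  · by_cases h2 : p + j ≤ q - 1
    · -- nondegenerate
      obtain ⟨d, hd⟩ : ∃ d, p = j + d := ⟨p - j, by omega⟩
      obtain ⟨r, hr⟩ : ∃ r, q = 2*j + d + r + 1 := ⟨q - 1 - p - j, by omega⟩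
      subst hd hr
      have e1 : 2*j + d + r + 1 - 1 = 2*j + d + r := by omega
      have e2 : 2*j + d + r - 2*j = d + r := by omega
      have e3 : j + d - j = d := by omega
      have e4 : d + r - d = r := by omega
      have e5 : 2*j + d + r + 1 - (j + d) = j + r + 1 := by omega
      have e6 : j + r + 1 - (j + 1) = r := by omega
      have e7 : 2*j - j = j := by omega
      rw [e1, e2, e3, e5, catalan_cast_real]
      rw [Nat.cast_choose ℝ (by omega : 2*j ≤ 2*j + d + r),
          Nat.cast_choose ℝ (by omega : d ≤ d + r),
          Nat.cast_choose ℝ (by omega : j ≤ j + d),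
          Nat.cast_choose ℝ (by omega : j + 1 ≤ j + r + 1),
          Nat.cast_choose ℝ (by omega : j ≤ 2*j)]
      rw [e2, e4, e3, e6, e7]
      have f0 : ∀ n : ℕ, (0:ℝ) < n.factorial := fun n => by exact_mod_cast Nat.factorial_pos n
      have g1 : ((j+1):ℝ) ≠ 0 := by positivity
      have g2 : (((j+1).factorial) : ℝ) = ((j+1):ℝ) * (j.factorial) := by
        exact_mod_cast Nat.factorial_succ j
      rw [g2]
      field_simp
    · -- p + j ≥ q: both sides zero
      rw [Nat.choose_eq_zero_of_lt (by omega : q-1-2*j < p - j),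
          Nat.choose_eq_zero_of_lt (by omega : q - p < j + 1)]
      first | (push_cast; ring) | push_cast
  · -- 2j > q-1
    rw [Nat.choose_eq_zero_of_lt (by omega : q-1 < 2*j),
        Nat.choose_eq_zero_of_lt (by omega : q - p < j + 1)]
    first | (push_cast; ring) | push_cast

lemma mp_sum_p (q p : ℕ) (hp : p < q) :
    ∑ j ∈ range (p+1), (catalan j : ℝ) * ((q-1).choose (2*j)) * ((q-1-2*j).choose (p-j))
      = (1/(q:ℝ)) * (q.choose p) * (q.choose (p+1)) := by
  have h : ∀ j ∈ range (p+1),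
      (catalan j : ℝ) * ((q-1).choose (2*j)) * ((q-1-2*j).choose (p-j))
        = ((p.choose j : ℝ) * ((q-p).choose (j+1)))
          * (((q-1).factorial) / ((p.factorial) * ((q-p).factorial))) := by
    intro j hj
    rw [mp_term q p j hp (by simpa [Nat.lt_succ_iff] using hj)]
    ring
  rw [Finset.sum_congr rfl h, ← Finset.sum_mul]
  have hv : (∑ j ∈ range (p+1), (p.choose j : ℝ) * ((q-p).choose (j+1)))
      = (q.choose (p+1) : ℝ) := by
    rw_mod_cast [← mp_vandermonde q p hp]
  rw [hv]
  have hq0 : (0:ℝ) < q := by exact_mod_cast Nat.pos_of_ne_zero (by omega)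
  have hcq : (q.choose p : ℝ) = (q.factorial) / ((p.factorial) * ((q-p).factorial)) :=
    Nat.cast_choose ℝ (le_of_lt hp)
  have hfq : ((q.factorial : ℝ)) = (q:ℝ) * ((q-1).factorial) := by
    have := Nat.mul_factorial_pred (show q ≠ 0 by omega)
    exact_mod_cast this.symm
  have f0 : ∀ n : ℕ, (0:ℝ) < n.factorial := fun n => by exact_mod_cast Nat.factorial_pos n
  rw [hcq, hfq]
  have : (q:ℝ) ≠ 0 := by positivity
  field_simp

lemma mp_poly (q : ℕ) (hq : 1 ≤ q) (γ : ℝ) :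
    ∑ j ∈ range q, (catalan j : ℝ) * ((q-1).choose (2*j)) * γ^j * (1+γ)^(q-1-2*j)
      = ∑ p ∈ range q, (1/(q:ℝ)) * (q.choose p) * (q.choose (p+1)) * γ^p := by
  set f : ℕ → ℕ → ℝ := fun j m =>
    (catalan j : ℝ) * ((q-1).choose (2*j)) * ((q-1-2*j).choose m) * γ^j * γ^m with hf
  have hvanish : ∀ j m, q ≤ j + m → f j m = 0 := by
    intro j m hjm
    by_cases h1 : 2*j ≤ q - 1
    · have : q - 1 - 2*j < m := by omega
      simp [hf, Nat.choose_eq_zero_of_lt this]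
    · have : q - 1 < 2*j := by omega
      simp [hf, Nat.choose_eq_zero_of_lt this]
  -- RHS as diagonal double sum
  have hrhs : ∑ p ∈ range q, (1/(q:ℝ)) * (q.choose p) * (q.choose (p+1)) * γ^p
      = ∑ p ∈ range q, ∑ j ∈ range (p+1), f j (p - j) := by
    refine Finset.sum_congr rfl fun p hp => ?_
    rw [← mp_sum_p q p (Finset.mem_range.mp hp), Finset.sum_mul]
    refine Finset.sum_congr rfl fun j hj => ?_
    have hjp : j ≤ p := by simpa [Nat.lt_succ_iff] using hj
    have : γ^p = γ^j * γ^(p-j) := by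
      rw [← pow_add]; congr 1; omega
    rw [hf]; simp only []
    rw [this]; ring
  rw [hrhs, Finset.sum_range_diag_flip q f]
  -- now LHS: expand each term
  refine Finset.sum_congr rfl fun j hj => ?_
  have hjq : j < q := Finset.mem_range.mp hj
  by_cases h1 : 2*j ≤ q - 1
  · have hpow : (1+γ)^(q-1-2*j) = ∑ m ∈ range (q-1-2*j+1), ((q-1-2*j).choose m : ℝ) * γ^m := by
      rw [add_comm (1:ℝ) γ, add_pow]
      simp [mul_comm]
    have hext : ∑ m ∈ range (q - j), f j m
        = ∑ m ∈ range (q-1-2*j+1), f j m := by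
      refine (Finset.sum_subset ?_ ?_).symm
      · intro m hm
        simp only [Finset.mem_range] at hm ⊢
        omega
      · intro m hm1 hm2
        simp only [Finset.mem_range] at hm1 hm2
        simp [hf, Nat.choose_eq_zero_of_lt (show q-1-2*j < m by omega)]
    rw [hext, hpow, Finset.mul_sum]
    refine Finset.sum_congr rfl fun m hm => ?_
    rw [hf]; ring
  · have : q - 1 < 2*j := by omega
    rw [Nat.choose_eq_zero_of_lt this]
    simp [hf, Nat.choose_eq_zero_of_lt this]


lemma cos_pow_int_even (j : ℕ) :
    ∫ x in (0:ℝ)..π, Real.cos x ^ (2*j) = π * (Nat.centralBinom j) / 4^j := by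
  induction j with
  | zero => simp [Nat.centralBinom]
  | succ n ih =>
    have h : 2*(n+1) = 2*n + 2 := by ring
    rw [h, integral_cos_pow, ih]
    simp only [Real.sin_pi, Real.sin_zero, mul_zero, zero_mul, sub_zero, zero_div, zero_add]
    have hcb' : ((n:ℝ) + 1) * (Nat.centralBinom (n+1) : ℝ)
        = 2 * (2*(n:ℝ)+1) * (Nat.centralBinom n : ℝ) := by
      exact_mod_cast Nat.succ_mul_centralBinom_succ n
    have hn1 : ((n:ℝ)+1) ≠ 0 := by positivity
    have h2n2 : ((2:ℝ)*(n:ℝ)+2) ≠ 0 := by positivity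
    have h4 : (4:ℝ)^(n+1) = 4 * 4^n := by ring
    rw [h4]
    push_cast
    field_simp
    linear_combination (-2) * hcb'

lemma cos_pow_int_odd (j : ℕ) :
    ∫ x in (0:ℝ)..π, Real.cos x ^ (2*j+1) = 0 := by
  induction j with
  | zero => simp
  | succ n ih =>
    have h : 2*(n+1)+1 = (2*n+1) + 2 := by ring
    rw [h, integral_cos_pow, ih]
    simp [Real.sin_pi, Real.sin_zero]

lemma wallis_even (j : ℕ) :
    ∫ x in (0:ℝ)..π, Real.cos x ^ (2*j) * Real.sin x ^ 2
      = π * (catalan j : ℝ) / (2 * 4^j) := by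
  have hsin : ∀ x : ℝ, Real.cos x ^ (2*j) * Real.sin x ^ 2
      = Real.cos x ^ (2*j) - Real.cos x ^ (2*j+2) := by
    intro x
    rw [pow_add]
    have := Real.sin_sq_add_cos_sq x
    linear_combination (Real.cos x ^ (2*j)) * this
  rw [intervalIntegral.integral_congr (fun x _ => hsin x)]
  rw [intervalIntegral.integral_sub (by apply Continuous.intervalIntegrable; fun_prop)
      (by apply Continuous.intervalIntegrable; fun_prop)]
  have h2 : 2*j + 2 = 2*(j+1) := by ring
  rw [h2, cos_pow_int_even, cos_pow_int_even]
  have hcb' : ((j:ℝ)+1) * (Nat.centralBinom (j+1) : ℝ)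
      = 2*(2*(j:ℝ)+1) * (Nat.centralBinom j : ℝ) := by
    exact_mod_cast Nat.succ_mul_centralBinom_succ j
  have hcat' : ((j:ℝ)+1) * (catalan j : ℝ) = (Nat.centralBinom j : ℝ) := by
    exact_mod_cast succ_mul_catalan_eq_centralBinom j
  have hn1 : ((j:ℝ)+1) ≠ 0 := by positivity
  have h4 : (4:ℝ)^(j+1) = 4 * 4^j := by ring
  have e1 : (Nat.centralBinom (j+1) : ℝ) = 2*(2*(j:ℝ)+1) * (Nat.centralBinom j) / ((j:ℝ)+1) := by
    field_simp
    linarith [hcb']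
  have e2 : ((catalan j : ℕ) : ℝ) = (Nat.centralBinom j : ℝ) / ((j:ℝ)+1) := by
    field_simp
    linarith [hcat']
  rw [h4, e1, e2]
  field_simp
  ring



lemma wallis_odd (j : ℕ) :
    ∫ x in (0:ℝ)..π, Real.cos x ^ (2*j+1) * Real.sin x ^ 2 = 0 := by
  have hsin : ∀ x : ℝ, Real.cos x ^ (2*j+1) * Real.sin x ^ 2
      = Real.cos x ^ (2*j+1) - Real.cos x ^ (2*j+1+2) := by
    intro x
    rw [pow_add]
    have h := Real.sin_sq_add_cos_sq x
    linear_combination (Real.cos x ^ (2*j+1)) * h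
  rw [intervalIntegral.integral_congr (fun x _ => hsin x)]
  rw [intervalIntegral.integral_sub (by apply Continuous.intervalIntegrable; fun_prop)
      (by apply Continuous.intervalIntegrable; fun_prop)]
  have h2 : 2*j+1+2 = 2*(j+1)+1 := by ring
  rw [h2, cos_pow_int_odd, cos_pow_int_odd, sub_zero]

lemma mp_subst (γ θ : ℝ) (hγ : 0 < γ) (hθ : 0 < θ) (n : ℕ) :
    ∫ x in (θ*(1-Real.sqrt γ)^2)..(θ*(1+Real.sqrt γ)^2),
        x^n * Real.sqrt ((θ*(1+Real.sqrt γ)^2 - x)*(x - θ*(1-Real.sqrt γ)^2))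
      = 4*θ^2*γ * ∫ φ in (0:ℝ)..π,
          (θ*(1+γ) + 2*θ*Real.sqrt γ * Real.cos φ)^n * Real.sin φ^2 := by
  set s := Real.sqrt γ with hs
  have hs0 : 0 < s := Real.sqrt_pos.mpr hγ
  have hs2 : s^2 = γ := Real.sq_sqrt hγ.le
  set a := θ*(1-s)^2 with ha
  set b := θ*(1+s)^2 with hb
  set f : ℝ → ℝ := fun φ => θ*(1+γ) + 2*θ*s*Real.cos φ with hf
  set f' : ℝ → ℝ := fun φ => -(2*θ*s)*Real.sin φ with hf'
  set g : ℝ → ℝ := fun x => x^n * Real.sqrt ((b - x)*(x - a)) with hg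
  have hderiv : ∀ φ ∈ uIcc (0:ℝ) π, HasDerivAt f (f' φ) φ := by
    intro φ _
    have h1 : HasDerivAt Real.cos (-Real.sin φ) φ := Real.hasDerivAt_cos φ
    have h2 := (h1.const_mul (2*θ*s)).const_add (θ*(1+γ))
    have e : f' φ = 2*θ*s * -Real.sin φ := by simp only [hf']; ring
    rw [e]; exact h2
  have hcont : ContinuousOn f' (uIcc (0:ℝ) π) := by fun_prop
  have hgc : Continuous g := by
    apply Continuous.mul (by fun_prop)
    exact Real.continuous_sqrt.comp (by fun_prop)
  have hchg := intervalIntegral.integral_comp_smul_deriv hderiv hcont hgc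
  have hf0 : f 0 = b := by
    simp only [hf, hb, Real.cos_zero]
    nlinarith [hs2]
  have hfπ : f π = a := by
    simp only [hf, ha, Real.cos_pi]
    nlinarith [hs2]
  rw [hf0, hfπ] at hchg
  have key : ∀ φ ∈ uIcc (0:ℝ) π, f' φ • (g ∘ f) φ
      = -(4*θ^2*γ) * ((f φ)^n * Real.sin φ^2) := by
    intro φ hφ
    have hφ' : φ ∈ Icc (0:ℝ) π := by
      rwa [uIcc_of_le Real.pi_pos.le] at hφ
    have hsin : 0 ≤ Real.sin φ := Real.sin_nonneg_of_nonneg_of_le_pi hφ'.1 hφ'.2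
    have hbf : b - f φ = 2*θ*s*(1 - Real.cos φ) := by
      simp only [hf, hb]; nlinarith [hs2]
    have haf : f φ - a = 2*θ*s*(1 + Real.cos φ) := by
      simp only [hf, ha]; nlinarith [hs2]
    have hsq : (b - f φ)*(f φ - a) = (2*θ*s*Real.sin φ)^2 := by
      rw [hbf, haf]
      have h := Real.sin_sq_add_cos_sq φ
      linear_combination (-4*θ^2*s^2) * h
    have hsqrt : Real.sqrt ((b - f φ)*(f φ - a)) = 2*θ*s*Real.sin φ := by
      rw [hsq, Real.sqrt_sq (by positivity)]
    simp only [hg, hf', Function.comp_apply, smul_eq_mul]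
    rw [hsqrt]
    linear_combination (-(4*θ^2) * (f φ)^n * Real.sin φ^2) * hs2
  have h2 : ∫ x in b..a, g x = -(4*θ^2*γ) * ∫ φ in (0:ℝ)..π, (f φ)^n * Real.sin φ^2 := by
    rw [← hchg, intervalIntegral.integral_congr key, intervalIntegral.integral_const_mul]
  have h4 : ∫ x in b..a, g x = - ∫ x in a..b, g x := intervalIntegral.integral_symm a b
  show ∫ x in a..b, g x = 4*θ^2*γ * ∫ φ in (0:ℝ)..π, (f φ)^n * Real.sin φ^2
  linear_combination -h2 + h4




lemma mp_reduce (γ θ : ℝ) (hγ : 0 < γ) (hθ : 0 < θ) (q : ℕ) (hq : 1 ≤ q) :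
    ∫ x, x ^ q ∂(marchenkoPastur γ θ)
      = ∫ x in (θ*(1-Real.sqrt γ)^2)..(θ*(1+Real.sqrt γ)^2),
          x^(q-1) * Real.sqrt ((θ*(1+Real.sqrt γ)^2 - x)*(x - θ*(1-Real.sqrt γ)^2))
            / (2*π*γ*θ) := by
  have hs0 : 0 < Real.sqrt γ := Real.sqrt_pos.mpr hγ
  set s := Real.sqrt γ with hs
  set a := θ*(1-s)^2 with ha
  set b := θ*(1+s)^2 with hb
  have ha0 : 0 ≤ a := by positivity
  have hab : a ≤ b := by nlinarith
  set ρ : ℝ → ℝ := fun x =>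
    if a ≤ x ∧ x ≤ b then Real.sqrt ((b - x)*(x - a)) / (2*π*γ*θ*x) else 0 with hρ
  have hρm : Measurable ρ := by
    apply Measurable.ite
    · exact (measurableSet_Icc (a := a) (b := b)).congr (by ext x; simp [Set.mem_Icc])
    · fun_prop
    · fun_prop
  have hρnn : ∀ x, 0 ≤ ρ x := by
    intro x
    rw [hρ]
    by_cases hx : a ≤ x ∧ x ≤ b
    · simp only [hx, if_true]
      have hx0 : 0 ≤ x := le_trans ha0 hx.1
      have hnum : 0 ≤ Real.sqrt ((b - x)*(x - a)) := Real.sqrt_nonneg _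
      have hden : 0 ≤ 2*π*γ*θ*x := by positivity
      positivity
    · simp [hx]
  set h : ℝ → ℝ := fun x => x^(q-1) * Real.sqrt ((b - x)*(x - a)) / (2*π*γ*θ) with hh
  have hhc : Continuous h := by
    apply Continuous.div_const
    exact (continuous_pow _).mul (Real.continuous_sqrt.comp (by fun_prop))
  have hpt : ∀ x : ℝ, ρ x * x ^ q = Set.indicator (Icc a b) h x := by
    intro x
    rw [hρ, hh]
    by_cases hx : a ≤ x ∧ x ≤ b
    · have hx' : x ∈ Icc a b := Set.mem_Icc.mpr hx
      rw [Set.indicator_of_mem hx']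
      simp only [hx, and_self, if_true]
      rcases eq_or_lt_of_le (le_trans ha0 hx.1) with hx0 | hx0
      · -- x = 0, hence a = 0
        have hx0' : x = 0 := hx0.symm
        have ha0' : a = 0 := le_antisymm (hx0' ▸ hx.1) ha0
        subst hx0'
        simp [ha0']
      · have hxne : x ≠ 0 := ne_of_gt hx0
        have hqq : x ^ q = x ^ (q-1) * x := by
          conv_lhs => rw [show q = (q-1) + 1 by omega]
          rw [pow_succ]
        rw [hqq]
        field_simp
    · have hx' : x ∉ Icc a b := fun hmem => hx (Set.mem_Icc.mp hmem)
      rw [Set.indicator_of_notMem hx']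
      simp [hx]
  have hmain : ∫ x, x ^ q ∂(marchenkoPastur γ θ)
      = ∫ x, Set.indicator (Icc a b) h x := by
    rw [marchenkoPastur]
    have hI1 : Integrable (fun x : ℝ => x ^ q)
        (ENNReal.ofReal (max (1 - 1 / γ) 0) • Measure.dirac 0) := by
      refine Integrable.smul_measure ?_ ENNReal.ofReal_ne_top
      exact (integrable_const ((0:ℝ) ^ q)).congr (ae_eq_dirac (fun x : ℝ => x ^ q)).symm
    have hρ_eq : (fun x => ENNReal.ofReal
        (if θ * (1 - Real.sqrt γ) ^ 2 ≤ x ∧ x ≤ θ * (1 + Real.sqrt γ) ^ 2 then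
          Real.sqrt ((θ * (1 + Real.sqrt γ) ^ 2 - x) * (x - θ * (1 - Real.sqrt γ) ^ 2)) /
            (2 * Real.pi * γ * θ * x)
        else 0)) = fun x => ENNReal.ofReal (ρ x) := by
      rfl
    rw [hρ_eq]
    have hIind : Integrable (Set.indicator (Icc a b) h) := by
      exact (hhc.continuousOn.integrableOn_compact isCompact_Icc).integrable_indicator
        measurableSet_Icc
    have hI2 : Integrable (fun x : ℝ => x ^ q)
        (volume.withDensity fun x => ENNReal.ofReal (ρ x)) := by
      rw [integrable_withDensity_iff (by fun_prop) (Filter.Eventually.of_forall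
        fun x => ENNReal.ofReal_lt_top)]
      apply hIind.congr
      apply Filter.Eventually.of_forall
      intro x
      show (Set.Icc a b).indicator h x = x ^ q * (ENNReal.ofReal (ρ x)).toReal
      rw [ENNReal.toReal_ofReal (hρnn x), ← hpt x]
      ring
    have hq0 : q ≠ 0 := by omega
    rw [integral_add_measure hI1 hI2, MeasureTheory.integral_smul_measure, integral_dirac,
      zero_pow hq0, smul_zero, zero_add]
    have hwd : ∀ x:ℝ, ENNReal.ofReal (ρ x) = ((Real.toNNReal (ρ x) : ℝ≥0) : ℝ≥0∞) := fun x => rfl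
    simp_rw [hwd]
    rw [integral_withDensity_eq_integral_smul (by fun_prop) (fun x => x ^ q)]
    congr 1
    ext x
    rw [NNReal.smul_def, smul_eq_mul, Real.coe_toNNReal _ (hρnn x), hpt x]
  rw [hmain, MeasureTheory.integral_indicator measurableSet_Icc, integral_Icc_eq_integral_Ioc,
    ← intervalIntegral.integral_of_le hab]




lemma sum_range_even (n : ℕ) (f : ℕ → ℝ) :
    ∑ k ∈ range (2*n), f k = ∑ j ∈ range n, (f (2*j) + f (2*j+1)) := by
  induction n with
  | zero => simp
  | succ m ih =>
    have h : 2*(m+1) = (2*m) + 1 + 1 := by ring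
    rw [h, Finset.sum_range_succ, Finset.sum_range_succ, ih, Finset.sum_range_succ]
    ring

lemma mp_rhs_reindex (γ : ℝ) (q : ℕ) (hq : 1 ≤ q) :
    ∑ l ∈ Finset.Icc 1 q, (1 / (q : ℝ)) * (Nat.choose q l : ℝ) * (Nat.choose q (l - 1) : ℝ)
        * γ ^ (q - l)
      = ∑ p ∈ range q, (1/(q:ℝ)) * (q.choose p) * (q.choose (p+1)) * γ^p := by
  refine Finset.sum_nbij' (fun l => q - l) (fun p => q - p) ?_ ?_ ?_ ?_ ?_
  · intro l hl
    simp only [Finset.mem_Icc] at hl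
    simp only [Finset.mem_range]
    omega
  · intro p hp
    simp only [Finset.mem_range] at hp
    simp only [Finset.mem_Icc]
    omega
  · intro l hl
    simp only [Finset.mem_Icc] at hl
    omega
  · intro p hp
    simp only [Finset.mem_range] at hp
    omega
  · intro l hl
    simp only [Finset.mem_Icc] at hl
    have h1 : q.choose (q - l) = q.choose l := Nat.choose_symm hl.2
    have h2 : q - l + 1 = q - (l-1) := by omega
    have h3 : q.choose (q - (l-1)) = q.choose (l-1) := Nat.choose_symm (by omega)
    rw [h1, h2, h3]


/-- The `q`-th moment of the Marchenko–Pastur distribution with shape `γ` and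
scale `θ` equals `θ^q Σ_{l=1}^q (1/q) C(q,l) C(q,l−1) γ^{q−l}`. -/
theorem marchenkoPastur_moment (γ θ : ℝ) (hγ : 0 < γ) (hθ : 0 < θ)
    (q : ℕ) (hq : 1 ≤ q) :
    ∫ x, x ^ q ∂(marchenkoPastur γ θ)
      = θ ^ q * ∑ l ∈ Finset.Icc 1 q,
          (1 / (q : ℝ)) * (Nat.choose q l : ℝ) * (Nat.choose q (l - 1) : ℝ)
            * γ ^ (q - l) := by
  have hs0 : 0 < Real.sqrt γ := Real.sqrt_pos.mpr hγ
  have hs2 : Real.sqrt γ ^ 2 = γ := Real.sq_sqrt hγ.le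
  rw [mp_reduce γ θ hγ hθ q hq]
  rw [mp_rhs_reindex γ q hq, ← mp_poly q hq γ]
  rw [intervalIntegral.integral_div, mp_subst γ θ hγ hθ (q-1)]
  have hexp : ∀ φ : ℝ, (θ*(1+γ) + 2*θ*Real.sqrt γ*Real.cos φ)^(q-1) * Real.sin φ^2
      = ∑ k ∈ range q, ((2*θ*Real.sqrt γ)^k * (θ*(1+γ))^(q-1-k) * (((q-1).choose k : ℕ) : ℝ))
          * (Real.cos φ^k * Real.sin φ^2) := by
    intro φ
    rw [add_comm (θ*(1+γ)) _, add_pow, show q - 1 + 1 = q from by omega, Finset.sum_mul]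
    refine Finset.sum_congr rfl fun k hk => ?_
    rw [mul_pow]
    ring
  have hIW : (∫ φ in (0:ℝ)..π, (θ*(1+γ) + 2*θ*Real.sqrt γ*Real.cos φ)^(q-1) * Real.sin φ^2)
      = ∑ k ∈ range q, ((2*θ*Real.sqrt γ)^k * (θ*(1+γ))^(q-1-k) * (((q-1).choose k : ℕ) : ℝ))
          * ∫ φ in (0:ℝ)..π, Real.cos φ^k * Real.sin φ^2 := by
    rw [intervalIntegral.integral_congr (fun φ _ => hexp φ)]
    rw [intervalIntegral.integral_finset_sum
      (fun k _ => Continuous.intervalIntegrable (by fun_prop) _ _)]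
    exact Finset.sum_congr rfl fun k hk => intervalIntegral.integral_const_mul _ _
  rw [hIW]
  set F : ℕ → ℝ := fun k => ((2*θ*Real.sqrt γ)^k * (θ*(1+γ))^(q-1-k) * (((q-1).choose k : ℕ) : ℝ))
      * ∫ φ in (0:ℝ)..π, Real.cos φ^k * Real.sin φ^2 with hF
  have hFzero : ∀ k, q ≤ k → F k = 0 := by
    intro k hk
    have hc : (q-1).choose k = 0 := Nat.choose_eq_zero_of_lt (by omega)
    simp [hF, hc]
  have hext : ∑ k ∈ range q, F k = ∑ k ∈ range (2*q), F k := by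
    apply Finset.sum_subset
    · exact Finset.range_subset_range.mpr (by omega)
    · intro k _ hk2
      simp only [Finset.mem_range] at hk2
      exact hFzero k (by omega)
  rw [hext, sum_range_even q F]
  have hodd : ∀ j ∈ range q, F (2*j) + F (2*j+1) = F (2*j) := by
    intro j _
    have : F (2*j+1) = 0 := by
      rw [hF]
      simp only []
      rw [wallis_odd j]
      ring
    rw [this, add_zero]
  rw [Finset.sum_congr rfl hodd, Finset.mul_sum, Finset.sum_div, Finset.mul_sum]
  refine Finset.sum_congr rfl fun j hj => ?_
  rw [hF]
  simp only []
  rw [wallis_even j]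
  by_cases h2j : 2*j ≤ q - 1
  · have hγj : (2*θ*Real.sqrt γ)^(2*j) = 4^j * (θ^2)^j * γ^j := by
      rw [pow_mul, show (2*θ*Real.sqrt γ)^2 = 4*θ^2*γ * 1 from by
        rw [mul_pow, mul_pow, hs2]; ring, mul_one]
      rw [mul_pow, mul_pow]
    have hθγ : (θ*(1+γ))^(q-1-2*j) = θ^(q-1-2*j) * (1+γ)^(q-1-2*j) := mul_pow _ _ _
    have hθq : θ^(q-1-2*j) * (θ^2)^j * θ = θ^q := by
      rw [← pow_mul, ← pow_add, ← pow_succ]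
      congr 1
      omega
    rw [hγj, hθγ, ← hθq]
    have hπ : (π:ℝ) ≠ 0 := Real.pi_ne_zero
    have hγ0 : γ ≠ 0 := ne_of_gt hγ
    have hθ0 : θ ≠ 0 := ne_of_gt hθ
    have h4 : (4:ℝ)^j ≠ 0 := by positivity
    field_simp
    ring
  · have hc : (q-1).choose (2*j) = 0 := Nat.choose_eq_zero_of_lt (by omega)
    rw [hc]
    simp
end

section
/- For f_α as above, θ₃(f_α) = E[(1/2)f_α''(N)]² = (α⁴/4)·e^{−α²} / (e^{−α²}(cosh(α²) − 1)) = α⁴ / (4(cosh(α²) − 1)), which tends to 1/2 as α → 0 and to 0 as α → ∞. -/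
open MeasureTheory ProbabilityTheory Filter Real Complex
open scoped ENNReal NNReal

lemma integral_exp_mul_cos (α : ℝ) :
    ∫ x : ℝ, Real.exp (-x ^ 2 / 2) * Real.cos (α * x)
      = Real.sqrt (2 * π) * Real.exp (-α ^ 2 / 2) := by
  have hb : ((-1/2 : ℂ)).re < 0 := by norm_num
  have hint := integral_cexp_quadratic hb (α * Complex.I) 0
  have hi := integrable_cexp_quadratic' hb (α * Complex.I) 0
  have hre : ∀ x : ℝ, (Complex.exp ((-1/2 : ℂ) * (x : ℂ) ^ 2 + (α * Complex.I) * x + 0)).re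
      = Real.exp (-x ^ 2 / 2) * Real.cos (α * x) := by
    intro x
    have hz : ((-1/2 : ℂ) * (x : ℂ) ^ 2 + (α * Complex.I) * x + 0)
        = Complex.ofReal (-x ^ 2 / 2) + Complex.ofReal (α * x) * Complex.I := by
      push_cast; ring
    rw [hz, Complex.exp_re]
    norm_num [Complex.add_re, Complex.add_im, Complex.ofReal_re, Complex.ofReal_im,
      Complex.mul_I_re, Complex.mul_I_im, ← Complex.ofReal_pow]
  have h1 : ∫ x : ℝ, Real.exp (-x ^ 2 / 2) * Real.cos (α * x)
      = (∫ x : ℝ, Complex.exp ((-1/2 : ℂ) * (x : ℂ) ^ 2 + (α * Complex.I) * x + 0)).re := by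
    have h := integral_re hi
    simp only [RCLike.re_to_complex] at h
    rw [← h]
    exact integral_congr_ae (Filter.Eventually.of_forall fun x => (hre x).symm)
  rw [h1, hint]
  have h2 : (0 : ℂ) - (α * Complex.I) ^ 2 / (4 * (-1/2 : ℂ)) = Complex.ofReal (-α ^ 2 / 2) := by
    rw [mul_pow, Complex.I_sq]
    push_cast
    ring
  have h3 : (↑π / -(-1/2 : ℂ)) = Complex.ofReal (2 * π) := by
    push_cast
    field_simp
  rw [h2, h3, ← Complex.ofReal_exp,
    show ((1 : ℂ)/2) = ((1/2 : ℝ) : ℂ) by norm_num,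
    ← Complex.ofReal_cpow (by positivity), ← Complex.ofReal_mul, Complex.ofReal_re,
    Real.sqrt_eq_rpow]

lemma integral_cos_gaussianReal (α : ℝ) :
    ∫ x, Real.cos (α * x) ∂(gaussianReal 0 1) = Real.exp (-α ^ 2 / 2) := by
  rw [gaussianReal_of_var_ne_zero _ one_ne_zero]
  have hpdf : gaussianPDF 0 1
      = fun x => ((gaussianPDFReal 0 1 x).toNNReal : ℝ≥0∞) := rfl
  rw [hpdf, integral_withDensity_eq_integral_smul
    (by exact (measurable_gaussianPDFReal 0 1).real_toNNReal) _]
  have heq : ∀ x : ℝ, ((gaussianPDFReal 0 1 x).toNNReal : ℝ≥0) • Real.cos (α * x)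
      = (Real.sqrt (2 * π))⁻¹ * (Real.exp (-x ^ 2 / 2) * Real.cos (α * x)) := by
    intro x
    rw [NNReal.smul_def, Real.coe_toNNReal _ (gaussianPDFReal_nonneg 0 1 x)]
    rw [gaussianPDFReal]
    push_cast
    rw [smul_eq_mul]
    ring_nf
  rw [integral_congr_ae (Filter.Eventually.of_forall heq), integral_const_mul,
    integral_exp_mul_cos]
  rw [← mul_assoc, inv_mul_cancel₀ (by positivity)]
  ring

/-- For `f_α(x) = (cos(αx) − e^{−α²/2})/√(e^{−α²}(cosh(α²) − 1))` and `N`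
standard Gaussian, `θ₃(f_α) = E[(1/2)f_α''(N)]² = α⁴/(4(cosh(α²) − 1))`,
which tends to `1/2` as `α → 0⁺` and to `0` as `α → ∞`. -/
theorem cosine_family_theta3 :
    (∀ α : ℝ, 0 < α →
      (∫ x, (1 / 2 : ℝ) * deriv (deriv (fun y =>
          (Real.cos (α * y) - Real.exp (-α ^ 2 / 2)) /
            Real.sqrt (Real.exp (-α ^ 2) * (Real.cosh (α ^ 2) - 1)))) x
        ∂(gaussianReal 0 1)) ^ 2
        = α ^ 4 / (4 * (Real.cosh (α ^ 2) - 1)))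
    ∧ Tendsto (fun α : ℝ => α ^ 4 / (4 * (Real.cosh (α ^ 2) - 1)))
        (nhdsWithin 0 (Set.Ioi 0)) (nhds (1 / 2))
    ∧ Tendsto (fun α : ℝ => α ^ 4 / (4 * (Real.cosh (α ^ 2) - 1)))
        atTop (nhds 0) := by
  refine ⟨?_, ?_, ?_⟩
  · intro α hα
    set c := Real.exp (-α ^ 2 / 2) with hc
    set s := Real.sqrt (Real.exp (-α ^ 2) * (Real.cosh (α ^ 2) - 1)) with hs
    have hcosh : 1 < Real.cosh (α ^ 2) := Real.one_lt_cosh.mpr (by positivity)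
    have hspos : 0 < s := Real.sqrt_pos.mpr (by
      have : 0 < Real.cosh (α ^ 2) - 1 := by linarith
      positivity)
    have hlin : ∀ x : ℝ, HasDerivAt (fun y : ℝ => α * y) α x := by
      intro x
      simpa using (hasDerivAt_id x).const_mul α
    have hd1 : deriv (fun y => (Real.cos (α * y) - c) / s)
        = fun y => -(α * Real.sin (α * y)) / s := by
      funext x
      have h : HasDerivAt (fun y => (Real.cos (α * y) - c) / s)
          (-(α * Real.sin (α * x)) / s) x := by
        have : HasDerivAt (fun y => (Real.cos (α * y) - c) / s) (-Real.sin (α * x) * α / s) x :=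
          (((Real.hasDerivAt_cos (α * x)).comp x (hlin x)).sub_const c).div_const s
        convert this using 1
        ring
      exact h.deriv
    rw [hd1]
    have hd2 : ∀ x : ℝ, deriv (fun y => -(α * Real.sin (α * y)) / s) x
        = -(α ^ 2 / s) * Real.cos (α * x) := by
      intro x
      have h : HasDerivAt (fun y => -(α * Real.sin (α * y)) / s)
          (-(α ^ 2 / s) * Real.cos (α * x)) x := by
        have : HasDerivAt (fun y => -(α * Real.sin (α * y)) / s) (-(α * (Real.cos (α * x) * α)) / s) x :=
          ((((Real.hasDerivAt_sin (α * x)).comp x (hlin x)).const_mul α).neg).div_const s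
        convert this using 1
        ring
      exact h.deriv
    have hint : ∀ x : ℝ, (1 / 2 : ℝ) * deriv (fun y => -(α * Real.sin (α * y)) / s) x
        = (-(α ^ 2 / (2 * s))) * Real.cos (α * x) := by
      intro x
      rw [hd2 x]; ring
    rw [integral_congr_ae (Filter.Eventually.of_forall hint), integral_const_mul,
      integral_cos_gaussianReal]
    have hsq : s ^ 2 = Real.exp (-α ^ 2) * (Real.cosh (α ^ 2) - 1) :=
      Real.sq_sqrt (by nlinarith [Real.exp_pos (-α ^ 2)])
    have hexp : Real.exp (-α ^ 2 / 2) ^ 2 = Real.exp (-α ^ 2) := by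
      rw [sq, ← Real.exp_add]
      congr 1
      ring
    have hch : Real.cosh (α ^ 2) - 1 ≠ 0 := by linarith
    have hepos := Real.exp_pos (-α ^ 2)
    field_simp
    rw [hsq, ← neg_div, hexp]
    ring
  · -- limit at 0⁺
    have hslope : Tendsto (fun u : ℝ => Real.sinh u / u) (nhdsWithin 0 {0}ᶜ) (nhds 1) := by
      have h := hasDerivAt_iff_tendsto_slope.mp (Real.hasDerivAt_sinh 0)
      rw [Real.cosh_zero] at h
      refine h.congr fun u => ?_
      simp [slope_def_field, div_eq_inv_mul]
    have hinv : Tendsto (fun u : ℝ => u / Real.sinh u) (nhdsWithin 0 {0}ᶜ) (nhds 1) := by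
      have h := hslope.inv₀ one_ne_zero
      rw [inv_one] at h
      refine h.congr fun u => ?_
      rw [inv_div]
    have hmain : Tendsto (fun u : ℝ => 1 / 2 * (u / Real.sinh u) ^ 2)
        (nhdsWithin 0 {0}ᶜ) (nhds (1 / 2)) := by
      have := ((hinv.pow 2).const_mul (1 / 2 : ℝ))
      simpa using this
    have hcomp : Tendsto (fun α : ℝ => α ^ 2 / 2) (nhdsWithin 0 (Set.Ioi 0))
        (nhdsWithin 0 {0}ᶜ) := by
      rw [tendsto_nhdsWithin_iff]
      constructor
      · have : Tendsto (fun α : ℝ => α ^ 2 / 2) (nhds 0) (nhds 0) := by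
          have : Continuous fun α : ℝ => α ^ 2 / 2 := by continuity
          simpa using this.tendsto 0
        exact this.mono_left nhdsWithin_le_nhds
      · filter_upwards [self_mem_nhdsWithin] with α (hα : 0 < α)
        simp only [Set.mem_compl_iff, Set.mem_singleton_iff]
        positivity
    have := hmain.comp hcomp
    refine this.congr fun α => ?_
    show 1 / 2 * (α ^ 2 / 2 / Real.sinh (α ^ 2 / 2)) ^ 2
        = α ^ 4 / (4 * (Real.cosh (α ^ 2) - 1))
    have hcosh2 : Real.cosh (α ^ 2) - 1 = 2 * Real.sinh (α ^ 2 / 2) ^ 2 := by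
      have h : α ^ 2 = 2 * (α ^ 2 / 2) := by ring
      rw [h, Real.cosh_two_mul, Real.cosh_sq]
      ring
    rw [hcosh2]
    rcases eq_or_ne (Real.sinh (α ^ 2 / 2)) 0 with h0 | h0
    · have hα0 : α = 0 := by
        have := Real.sinh_eq_zero.mp h0
        nlinarith
      simp [h0, hα0]
    · field_simp
      ring
  · -- limit at ∞
    have hbound : Tendsto (fun α : ℝ => (α ^ 2) ^ 2 * Real.exp (-α ^ 2)) atTop (nhds 0) := by
      have h1 : Tendsto (fun t : ℝ => t ^ 2 * Real.exp (-t)) atTop (nhds 0) :=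
        tendsto_pow_mul_exp_neg_atTop_nhds_zero 2
      have h2 : Tendsto (fun α : ℝ => α ^ 2) atTop atTop :=
        tendsto_pow_atTop two_ne_zero
      exact h1.comp h2
    refine tendsto_of_tendsto_of_tendsto_of_le_of_le' tendsto_const_nhds hbound ?_ ?_
    · filter_upwards [eventually_ge_atTop (1 : ℝ)] with α hα
      have : 1 < Real.cosh (α ^ 2) := Real.one_lt_cosh.mpr (by positivity)
      have : 0 < Real.cosh (α ^ 2) - 1 := by linarith
      positivity
    · filter_upwards [eventually_ge_atTop (2 : ℝ)] with α hα
      have ht : (2 : ℝ) ≤ α ^ 2 := by nlinarith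
      have hexp4 : (4 : ℝ) ≤ Real.exp (α ^ 2) := by
        have h2 : Real.exp 2 ≤ Real.exp (α ^ 2) := Real.exp_le_exp.mpr ht
        have he1 : (2 : ℝ) ≤ Real.exp 1 := by
          have := Real.add_one_le_exp (1 : ℝ)
          linarith
        have : Real.exp 2 = Real.exp 1 * Real.exp 1 := by
          rw [← Real.exp_add]; norm_num
        nlinarith [Real.exp_pos (1 : ℝ)]
      have hcosh : Real.exp (α ^ 2) / 4 ≤ Real.cosh (α ^ 2) - 1 := by
        rw [Real.cosh_eq]
        have := Real.exp_pos (-(α ^ 2))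
        nlinarith
      have hpos : (0 : ℝ) < Real.exp (α ^ 2) / 4 := by positivity
      have hle : α ^ 4 / (4 * (Real.cosh (α ^ 2) - 1))
          ≤ α ^ 4 / (4 * (Real.exp (α ^ 2) / 4)) := by
        apply div_le_div_of_nonneg_left (by positivity) (by linarith) (by linarith)
      refine hle.trans ?_
      rw [Real.exp_neg]
      have he := Real.exp_pos (α ^ 2)
      rw [div_le_iff₀ (by positivity)]
      field_simp
      nlinarith [Real.exp_pos (α ^ 2)]
end
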